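/- arXiv:2605.08026 — 5 statements merged into one kernel-verified Lean document; each statement's English description precedes it below -/
import Mathlib

section
/- Let F : ℝ^n → ℝ^ℓ be locally Lipschitz continuous and directionally differentiable, let Γ ⊂ ℝ^ℓ be closed, and set Z := {(x, δ) ∈ ℝ^n × ℝ^ℓ : F(x) − δ ∈ Γ}. Then for each (x, δ) ∈ Z one has N_Z((x, δ)) ⊂ {(ξ, −λ) ∈ ℝ^n × ℝ^ℓ : ξ ∈ ∂⟨λ, F⟩(x), λ ∈ N_Γ(F(x) − δ)}. -/
open Filter Topology Metric Set
open scoped RealInnerProductSpace Pointwise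

noncomputable section

/-- Euclidean space `ℝ^n`. -/
abbrev Eu (n : ℕ) := EuclideanSpace ℝ (Fin n)

section Cones

variable {H : Type*} [NormedAddCommGroup H] [InnerProductSpace ℝ H]

/-- Tangent (Bouligand) cone to `Ω` at `x` (empty if `x ∉ Ω`). -/
def tanCone (Ω : Set H) (x : H) : Set H :=
  {d | x ∈ Ω ∧ ∃ (dk : ℕ → H) (tk : ℕ → ℝ),
    Tendsto dk atTop (𝓝 d) ∧ (∀ k, 0 < tk k) ∧ Tendsto tk atTop (𝓝 0) ∧
    ∀ k, x + tk k • dk k ∈ Ω}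

/-- Polar cone of a set. -/
def polarCone (C : Set H) : Set H := {y | ∀ x ∈ C, ⟪x, y⟫ ≤ 0}

/-- Regular (Fréchet) normal cone: polar of the tangent cone (empty if `x ∉ Ω`). -/
def regNormal (Ω : Set H) (x : H) : Set H :=
  {η | x ∈ Ω ∧ η ∈ polarCone (tanCone Ω x)}

/-- Limiting (Mordukhovich) normal cone (empty if `x ∉ Ω`). -/
def limNormal (Ω : Set H) (x : H) : Set H :=
  {η | x ∈ Ω ∧ ∃ (xk ηk : ℕ → H),
    Tendsto xk atTop (𝓝 x) ∧ Tendsto ηk atTop (𝓝 η) ∧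
    ∀ k, ηk k ∈ regNormal Ω (xk k)}

/-- Directional limiting normal cone to `Ω` at `x` in direction `d`. -/
def dirLimNormal (Ω : Set H) (x d : H) : Set H :=
  {η | x ∈ Ω ∧ ∃ (dk : ℕ → H) (tk : ℕ → ℝ) (ηk : ℕ → H),
    Tendsto dk atTop (𝓝 d) ∧ (∀ k, 0 < tk k) ∧ Tendsto tk atTop (𝓝 0) ∧
    Tendsto ηk atTop (𝓝 η) ∧
    ∀ k, ηk k ∈ regNormal Ω (x + tk k • dk k)}

/-- The pair `(ξ, r)` as an element of the ℓ²-product `H ×₂ ℝ`. -/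
def pl2 (ξ : H) (r : ℝ) : WithLp 2 (H × ℝ) := (WithLp.equiv 2 (H × ℝ)).symm (ξ, r)

/-- Epigraph of `φ` as a subset of the ℓ²-product `H ×₂ ℝ`. -/
def epigraphSet (φ : H → ℝ) : Set (WithLp 2 (H × ℝ)) :=
  {p | φ ((WithLp.equiv 2 (H × ℝ)) p).1 ≤ ((WithLp.equiv 2 (H × ℝ)) p).2}

/-- Limiting subdifferential of `φ` at `x`. -/
def limSubdiff (φ : H → ℝ) (x : H) : Set H :=
  {ξ | pl2 ξ (-1) ∈ limNormal (epigraphSet φ) (pl2 x (φ x))}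

/-- Directional limiting subdifferential of `φ` at `x` in direction `d`, where `φd`
denotes the directional derivative `φ'(x; d)`. -/
def dirLimSubdiff (φ : H → ℝ) (x d : H) (φd : ℝ) : Set H :=
  {ξ | pl2 ξ (-1) ∈ dirLimNormal (epigraphSet φ) (pl2 x (φ x)) (pl2 d φd)}

/-- Directional neighborhood `B_{ε,δ}(d)`. -/
def dirNbhd (d : H) (ε δ : ℝ) : Set H :=
  {y | ‖y‖ ≤ ε ∧ ‖‖d‖ • y - ‖y‖ • d‖ ≤ δ * (‖y‖ * ‖d‖)}

end Cones

section Problem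

variable {n l : ℕ}

/-- `F' x d` is the directional derivative of `F` at `x` in direction `d`. -/
def IsDirDeriv (F : Eu n → Eu l) (F' : Eu n → Eu n → Eu l) : Prop :=
  ∀ x d : Eu n,
    Tendsto (fun t : ℝ => t⁻¹ • (F (x + t • d) - F x)) (𝓝[>] (0:ℝ)) (𝓝 (F' x d))

/-- Limiting subdifferential of the scalarization `⟨λ, F⟩` at `x`. -/
def scalSubdiff (F : Eu n → Eu l) (lam : Eu l) (x : Eu n) : Set (Eu n) :=
  limSubdiff (fun y => ⟪lam, F y⟫) x

/-- Directional limiting subdifferential of `⟨λ, F⟩` at `x` in direction `d`. -/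
def scalDirSubdiff (F : Eu n → Eu l) (F' : Eu n → Eu n → Eu l) (lam : Eu l)
    (x d : Eu n) : Set (Eu n) :=
  dirLimSubdiff (fun y => ⟪lam, F y⟫) x d ⟪lam, F' x d⟫

/-- Linearization cone. -/
def linCone (F : Eu n → Eu l) (F' : Eu n → Eu n → Eu l) (Γ : Set (Eu l)) (x : Eu n) :
    Set (Eu n) :=
  {d | F' x d ∈ tanCone Γ (F x)}

/-- Explicit critical cone `C(x̄)`. -/
def critCone (f : Eu n → ℝ) (F : Eu n → Eu l) (F' : Eu n → Eu n → Eu l)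
    (Γ : Set (Eu l)) (x : Eu n) : Set (Eu n) :=
  {d | ⟪gradient f x, d⟫ ≤ 0 ∧ d ∈ linCone F F' Γ x}

/-- Implicit critical cone `Ĉ(x̄)`. -/
def implCritCone (f : Eu n → ℝ) (F : Eu n → Eu l) (Γ : Set (Eu l)) (x : Eu n) :
    Set (Eu n) :=
  {d | ⟪gradient f x, d⟫ ≤ 0 ∧ d ∈ tanCone (F ⁻¹' Γ) x}

/-- M-stationarity. -/
def MStat (f : Eu n → ℝ) (F : Eu n → Eu l) (Γ : Set (Eu l)) (x : Eu n) : Prop :=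
  ∃ lam : Eu l, -gradient f x ∈ scalSubdiff F lam x ∧ lam ∈ limNormal Γ (F x)

/-- M-stationarity in direction `d`. -/
def MStatDir (f : Eu n → ℝ) (F : Eu n → Eu l) (F' : Eu n → Eu n → Eu l)
    (Γ : Set (Eu l)) (x d : Eu n) : Prop :=
  ∃ lam : Eu l, -gradient f x ∈ scalDirSubdiff F F' lam x d ∧
    lam ∈ dirLimNormal Γ (F x) (F' x d)

/-- Metric subregularity constraint qualification in direction `d`. -/
def MSCQdir (F : Eu n → Eu l) (Γ : Set (Eu l)) (x d : Eu n) : Prop :=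
  ∃ ε > (0:ℝ), ∃ δ > (0:ℝ), ∃ κ > (0:ℝ), ∀ y : Eu n, y - x ∈ dirNbhd d ε δ →
    infDist y (F ⁻¹' Γ) ≤ κ * infDist (F y) Γ

/-- Metric subregularity constraint qualification. -/
def MSCQ (F : Eu n → Eu l) (Γ : Set (Eu l)) (x : Eu n) : Prop := MSCQdir F Γ x 0

/-- AM-stationary sequence w.r.t. `x`. -/
def AMSeq (f : Eu n → ℝ) (F : Eu n → Eu l) (Γ : Set (Eu l)) (x : Eu n)
    (xk : ℕ → Eu n) (lamk δk : ℕ → Eu l) (εk : ℕ → Eu n) : Prop :=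
  (∀ k, εk k - gradient f (xk k) ∈ scalSubdiff F (lamk k) (xk k)) ∧
  (∀ k, lamk k ∈ limNormal Γ (F (xk k) - δk k)) ∧
  Tendsto xk atTop (𝓝 x) ∧ Tendsto δk atTop (𝓝 0) ∧ Tendsto εk atTop (𝓝 0)

/-- AM-stationarity. -/
def AMStat (f : Eu n → ℝ) (F : Eu n → Eu l) (Γ : Set (Eu l)) (x : Eu n) : Prop :=
  ∃ xk lamk δk εk, AMSeq f F Γ x xk lamk δk εk

/-- AM-stationary sequence w.r.t. `x` in direction `d`. -/
def AMSeqDir (f : Eu n → ℝ) (F : Eu n → Eu l) (Γ : Set (Eu l)) (x : Eu n)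
    (xk : ℕ → Eu n) (lamk δk : ℕ → Eu l) (εk : ℕ → Eu n) (d : Eu n) : Prop :=
  AMSeq f F Γ x xk lamk δk εk ∧
  (∀ k, xk k ≠ x) ∧
  Tendsto (fun k => ‖xk k - x‖⁻¹ • (xk k - x)) atTop (𝓝 d) ∧
  Tendsto (fun k => ‖xk k - x‖⁻¹ • δk k) atTop (𝓝 (0 : Eu l)) ∧
  (∃ θ : ℕ → ℝ, (∀ k, 0 ≤ θ k) ∧ Tendsto θ atTop (𝓝 0) ∧
    ∀ k, ‖‖δk k‖ • lamk k - ‖lamk k‖ • δk k‖ ≤ ‖δk k‖ * ‖lamk k‖ * θ k) ∧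
  (∃ M : ℝ, ∀ k, ‖δk k‖ * ‖lamk k‖ / ‖xk k - x‖ ≤ M)

/-- AM-stationarity in direction `d`. -/
def AMStatDir (f : Eu n → ℝ) (F : Eu n → Eu l) (Γ : Set (Eu l)) (x d : Eu n) : Prop :=
  ∃ xk lamk δk εk, AMSeqDir f F Γ x xk lamk δk εk d

/-- The Minkowski sum `Σ_i |λ_i| ∂(sgn(λ_i) F_i)(x; d)`. -/
def dirSumSet (F : Eu n → Eu l) (F' : Eu n → Eu n → Eu l) (lam : Eu l) (x d : Eu n) :
    Set (Eu n) :=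
  {v | ∃ s : Fin l → Eu n,
    (∀ i, s i ∈ |lam i| • dirLimSubdiff (fun y => Real.sign (lam i) * F y i) x d
        (Real.sign (lam i) * F' x d i)) ∧
    v = ∑ i, s i}

/-- Standing sum-rule assumption. -/
def SumRule (F : Eu n → Eu l) (F' : Eu n → Eu n → Eu l) : Prop :=
  ∀ (x d : Eu n) (lam : Eu l), scalDirSubdiff F F' lam x d = dirSumSet F F' lam x d

end Problem

section WP
variable {A B : Type*} [NormedAddCommGroup A] [InnerProductSpace ℝ A]
  [NormedAddCommGroup B] [InnerProductSpace ℝ B]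

lemma wp_tendsto_of {f : ℕ → WithLp 2 (A × B)} {p : WithLp 2 (A × B)}
    (h1 : Tendsto (fun k => (f k).fst) atTop (𝓝 p.fst))
    (h2 : Tendsto (fun k => (f k).snd) atTop (𝓝 p.snd)) :
    Tendsto f atTop (𝓝 p) := by
  have h := ((WithLp.prodContinuousLinearEquiv 2 ℝ A B).symm.continuous.tendsto
    (p.fst, p.snd)).comp (h1.prodMk_nhds h2)
  convert h using 2 <;> rfl

lemma wp_tendsto_fst {f : ℕ → WithLp 2 (A × B)} {p : WithLp 2 (A × B)}
    (h : Tendsto f atTop (𝓝 p)) : Tendsto (fun k => (f k).fst) atTop (𝓝 p.fst) := by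
  have h2 := ((WithLp.prodContinuousLinearEquiv 2 ℝ A B).continuous.tendsto p).comp h
  exact (continuous_fst.tendsto _).comp h2

lemma wp_tendsto_snd {f : ℕ → WithLp 2 (A × B)} {p : WithLp 2 (A × B)}
    (h : Tendsto f atTop (𝓝 p)) : Tendsto (fun k => (f k).snd) atTop (𝓝 p.snd) := by
  have h2 := ((WithLp.prodContinuousLinearEquiv 2 ℝ A B).continuous.tendsto p).comp h
  exact (continuous_snd.tendsto _).comp h2

lemma wp_inner_R (x y : WithLp 2 (A × ℝ)) : ⟪x, y⟫ = ⟪x.fst, y.fst⟫ + x.snd * y.snd := by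
  rw [WithLp.prod_inner_apply]; simp [RCLike.inner_apply]; ring

lemma wp_inner (x y : WithLp 2 (A × B)) : ⟪x, y⟫ = ⟪x.fst, y.fst⟫ + ⟪x.snd, y.snd⟫ := rfl
end WP

variable {n l : ℕ}

lemma scal_dirDeriv {F : Eu n → Eu l} {F' : Eu n → Eu n → Eu l} (hF' : IsDirDeriv F F')
    (lam : Eu l) (y d : Eu n) :
    Tendsto (fun t : ℝ => t⁻¹ * (⟪lam, F (y + t • d)⟫ - ⟪lam, F y⟫)) (𝓝[>] (0:ℝ))
      (𝓝 ⟪lam, F' y d⟫) := by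
  have hc : Continuous fun v : Eu l => ⟪lam, v⟫ := continuous_const.inner continuous_id
  have h := (hc.tendsto (F' y d)).comp (hF' y d)
  convert h using 2 with t
  simp only [Function.comp_apply, real_inner_smul_right, inner_sub_right]

lemma scal_lip {F : Eu n → Eu l} {K : NNReal} {s : Set (Eu n)} (hK : LipschitzOnWith K F s)
    (lam : Eu l) {a b : Eu n} (ha : a ∈ s) (hb : b ∈ s) :
    |⟪lam, F a⟫ - ⟪lam, F b⟫| ≤ ‖lam‖ * ((K : ℝ) * ‖a - b‖) := by
  have h1 : ⟪lam, F a⟫ - ⟪lam, F b⟫ = ⟪lam, F a - F b⟫ := (inner_sub_right _ _ _).symm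
  rw [h1]
  calc |⟪lam, F a - F b⟫| ≤ ‖lam‖ * ‖F a - F b‖ := abs_real_inner_le_norm _ _
  _ ≤ ‖lam‖ * ((K : ℝ) * ‖a - b‖) := by
      apply mul_le_mul_of_nonneg_left _ (norm_nonneg _)
      have := hK.dist_le_mul a ha b hb
      rwa [dist_eq_norm, dist_eq_norm] at this

lemma dirDeriv_norm_le {F : Eu n → Eu l} {F' : Eu n → Eu n → Eu l} (hF' : IsDirDeriv F F')
    {K : NNReal} {y : Eu n} {r : ℝ} (hr : 0 < r) (hK : LipschitzOnWith K F (ball y r))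
    (d : Eu n) : ‖F' y d‖ ≤ (K : ℝ) * ‖d‖ := by
  have hset : Ioo (0:ℝ) (r / (‖d‖ + 1)) ∈ 𝓝[>] (0:ℝ) :=
    Ioo_mem_nhdsGT_of_mem (by constructor <;> [rfl; positivity])
  have hev : ∀ᶠ t : ℝ in 𝓝[>] (0:ℝ), ‖t⁻¹ • (F (y + t • d) - F y)‖ ≤ (K : ℝ) * ‖d‖ := by
    filter_upwards [hset] with t ht
    obtain ⟨ht0, htr⟩ := ht
    have hd1 : t * ‖d‖ < r := by
      calc t * ‖d‖ ≤ t * (‖d‖ + 1) := by nlinarith [norm_nonneg d]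
      _ < r := by
        rw [lt_div_iff₀ (by positivity)] at htr; linarith [htr]
    have hmem1 : y + t • d ∈ ball y r := by
      rw [mem_ball, dist_eq_norm]
      simpa [norm_smul, abs_of_pos ht0] using hd1
    have hmem2 : y ∈ ball y r := mem_ball_self hr
    have hb := hK.dist_le_mul _ hmem1 _ hmem2
    rw [dist_eq_norm, dist_eq_norm] at hb
    have he : y + t • d - y = t • d := by abel
    rw [he, norm_smul, Real.norm_eq_abs, abs_of_pos ht0] at hb
    rw [norm_smul, Real.norm_eq_abs, abs_of_pos (inv_pos.mpr ht0)]
    calc t⁻¹ * ‖F (y + t • d) - F y‖ ≤ t⁻¹ * ((K : ℝ) * (t * ‖d‖)) := by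
          apply mul_le_mul_of_nonneg_left hb (by positivity)
    _ = (K : ℝ) * ‖d‖ := by field_simp
  exact le_of_tendsto (hF' y d).norm hev
lemma hadamard {F : Eu n → Eu l} {F' : Eu n → Eu n → Eu l} (hF' : IsDirDeriv F F')
    (lam : Eu l) {K : NNReal} {y : Eu n} {r : ℝ} (hr : 0 < r)
    (hK : LipschitzOnWith K F (ball y r))
    {tj : ℕ → ℝ} (htpos : ∀ j, 0 < tj j) (ht0 : Tendsto tj atTop (𝓝 0))
    {uj : ℕ → Eu n} {u : Eu n} (hu : Tendsto uj atTop (𝓝 u)) :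
    Tendsto (fun j => (tj j)⁻¹ * (⟪lam, F (y + tj j • uj j)⟫ - ⟪lam, F y⟫)) atTop
      (𝓝 ⟪lam, F' y u⟫) := by
  have htI : Tendsto tj atTop (𝓝[>] (0:ℝ)) :=
    tendsto_nhdsWithin_iff.mpr ⟨ht0, Eventually.of_forall htpos⟩
  have hA : Tendsto (fun j => (tj j)⁻¹ * (⟪lam, F (y + tj j • u)⟫ - ⟪lam, F y⟫)) atTop
      (𝓝 ⟪lam, F' y u⟫) := (scal_dirDeriv hF' lam y u).comp htI
  have hubd : ∀ᶠ j in atTop, ‖uj j‖ < ‖u‖ + 1 :=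
    hu.norm.eventually (Filter.Tendsto.eventually_lt_const (lt_add_one ‖u‖) tendsto_id)
  have hsmall : ∀ᶠ j in atTop, tj j * (‖u‖ + 1) < r :=
    (ht0.mul_const (‖u‖ + 1)).eventually (Filter.Tendsto.eventually_lt_const (by simpa using hr) tendsto_id)
  have hn0 : Tendsto (fun j => ‖uj j - u‖) atTop (𝓝 0) :=
    tendsto_iff_norm_sub_tendsto_zero.mp hu
  have hq : Tendsto (fun j => ‖lam‖ * ((K : ℝ) * ‖uj j - u‖)) atTop (𝓝 0) := by
    have := hn0.const_mul (‖lam‖ * (K : ℝ))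
    simpa [mul_assoc] using this
  have hB : Tendsto
      (fun j => (tj j)⁻¹ * (⟪lam, F (y + tj j • uj j)⟫ - ⟪lam, F (y + tj j • u)⟫)) atTop
      (𝓝 0) := by
    apply squeeze_zero_norm' _ hq
    filter_upwards [hubd, hsmall] with j h1 h2
    have ht := htpos j
    have hm1 : y + tj j • uj j ∈ ball y r := by
      rw [mem_ball, dist_eq_norm]
      have : y + tj j • uj j - y = tj j • uj j := by abel
      rw [this, norm_smul, Real.norm_eq_abs, abs_of_pos ht]
      calc tj j * ‖uj j‖ ≤ tj j * (‖u‖ + 1) := by nlinarith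
      _ < r := h2
    have hm2 : y + tj j • u ∈ ball y r := by
      rw [mem_ball, dist_eq_norm]
      have : y + tj j • u - y = tj j • u := by abel
      rw [this, norm_smul, Real.norm_eq_abs, abs_of_pos ht]
      calc tj j * ‖u‖ ≤ tj j * (‖u‖ + 1) := by nlinarith [norm_nonneg u]
      _ < r := h2
    have hd := scal_lip hK lam hm1 hm2
    have he : y + tj j • uj j - (y + tj j • u) = tj j • (uj j - u) := by
      rw [smul_sub]; abel
    rw [he, norm_smul, Real.norm_eq_abs, abs_of_pos ht] at hd
    rw [Real.norm_eq_abs, abs_mul, abs_of_pos (inv_pos.mpr ht)]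
    calc (tj j)⁻¹ * |⟪lam, F (y + tj j • uj j)⟫ - ⟪lam, F (y + tj j • u)⟫|
        ≤ (tj j)⁻¹ * (‖lam‖ * ((K : ℝ) * (tj j * ‖uj j - u‖))) :=
          mul_le_mul_of_nonneg_left hd (by positivity)
    _ = ‖lam‖ * ((K : ℝ) * ‖uj j - u‖) := by field_simp
  have := hA.add hB
  rw [add_zero] at this
  convert this using 2 with j
  ring

lemma epsFrechet {F : Eu n → Eu l} {F' : Eu n → Eu n → Eu l} (hF' : IsDirDeriv F F')
    (lam : Eu l) {K : NNReal} {y : Eu n} {r : ℝ} (hr : 0 < r)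
    (hK : LipschitzOnWith K F (ball y r)) (ξ : Eu n) {c ε : ℝ} (hε : 0 < ε)
    (hdini : ∀ d : Eu n, ⟪ξ, d⟫ ≤ ⟪lam, F' y d⟫ + c * ‖d‖) :
    ∃ ρ > (0:ℝ), ∀ u : Eu n, ‖u - y‖ < ρ →
      ⟪lam, F y⟫ + ⟪ξ, u - y⟫ - (c + ε) * ‖u - y‖ ≤ ⟪lam, F u⟫ := by
  by_contra hcon
  push_neg at hcon
  have hsel : ∀ j : ℕ, ∃ u : Eu n, ‖u - y‖ < 1/(j+1) ∧
      ⟪lam, F u⟫ < ⟪lam, F y⟫ + ⟪ξ, u - y⟫ - (c + ε) * ‖u - y‖ := by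
    intro j
    obtain ⟨u, hu1, hu2⟩ := hcon (1/(j+1)) (by positivity)
    exact ⟨u, hu1, hu2⟩
  choose u hu1 hu2 using hsel
  set t : ℕ → ℝ := fun j => ‖u j - y‖ with htdef
  have htpos : ∀ j, 0 < t j := by
    intro j
    rcases eq_or_lt_of_le (norm_nonneg (u j - y)) with h | h
    · exfalso
      have h0 : u j - y = 0 := by
        have := h.symm; rwa [norm_eq_zero] at this
      have hy : u j = y := by
        have := sub_eq_zero.mp h0; exact this
      have := hu2 j
      rw [hy] at this
      simp at this
    · exact h
  set d : ℕ → Eu n := fun j => (t j)⁻¹ • (u j - y) with hddef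
  have hdsph : ∀ j, d j ∈ sphere (0 : Eu n) 1 := by
    intro j
    rw [mem_sphere_zero_iff_norm, hddef]
    rw [norm_smul, Real.norm_eq_abs, abs_of_pos (inv_pos.mpr (htpos j))]
    exact inv_mul_cancel₀ (ne_of_gt (htpos j))
  obtain ⟨dl, hdl, φ, hφ, hconv⟩ :=
    (isCompact_sphere (0 : Eu n) 1).tendsto_subseq hdsph
  have ht0 : Tendsto t atTop (𝓝 0) := by
    apply squeeze_zero (fun j => (htpos j).le) (fun j => (hu1 j).le)
    simpa using tendsto_one_div_add_atTop_nhds_zero_nat (𝕜 := ℝ)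
  have ht0φ : Tendsto (t ∘ φ) atTop (𝓝 0) := ht0.comp hφ.tendsto_atTop
  have htposφ : ∀ j, 0 < (t ∘ φ) j := fun j => htpos (φ j)
  have hH := hadamard hF' lam hr hK htposφ ht0φ hconv
  have hid : ∀ j, y + t j • d j = u j := by
    intro j
    rw [hddef]
    rw [smul_inv_smul₀ (ne_of_gt (htpos j))]
    abel
  have hkey : ∀ j, (t j)⁻¹ * (⟪lam, F (y + t j • d j)⟫ - ⟪lam, F y⟫) ≤ ⟪ξ, d j⟫ - (c + ε) := by
    intro j
    rw [hid j]
    have h2 := hu2 j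
    have hinner : ⟪ξ, u j - y⟫ = t j * ⟪ξ, d j⟫ := by
      rw [hddef, real_inner_smul_right, ← mul_assoc, mul_inv_cancel₀ (ne_of_gt (htpos j)), one_mul]
    rw [hinner] at h2
    have ht := htpos j
    rw [inv_mul_le_iff₀ ht]
    nlinarith
  have hRHS : Tendsto (fun j => ⟪ξ, d (φ j)⟫ - (c + ε)) atTop (𝓝 (⟪ξ, dl⟫ - (c + ε))) := by
    have hc : Continuous fun v : Eu n => ⟪ξ, v⟫ := continuous_const.inner continuous_id
    exact ((hc.tendsto dl).comp hconv).sub_const _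
  have hfin : ⟪lam, F' y dl⟫ ≤ ⟪ξ, dl⟫ - (c + ε) :=
    le_of_tendsto_of_tendsto' hH hRHS (fun j => hkey (φ j))
  have hd1 : ‖dl‖ = 1 := mem_sphere_zero_iff_norm.mp hdl
  have := hdini dl
  rw [hd1] at this
  linarith

lemma penal {F : Eu n → Eu l} {F' : Eu n → Eu n → Eu l} (hLip : LocallyLipschitz F)
    (hF' : IsDirDeriv F F') (lam : Eu l) (y ξ : Eu n) {E ρ : ℝ} (hE : 0 < E) (hρ : 0 < ρ)
    (hball : ∀ u : Eu n, ‖u - y‖ < ρ →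
      ⟪lam, F y⟫ + ⟪ξ, u - y⟫ - E * ‖u - y‖ ≤ ⟪lam, F u⟫)
    {ν : ℝ} (hν : 0 < ν) (hνρ : ν < ρ) :
    ∃ z ζ : Eu n, ‖z - y‖ ≤ ν ∧ ‖ζ - ξ‖ ≤ 2 * E ∧ ∀ d, ⟪ζ, d⟫ ≤ ⟪lam, F' z d⟫ := by
  set g : Eu n → ℝ := fun v => ⟪lam, F v⟫ with hgdef
  have hgc : Continuous g := continuous_const.inner hLip.continuous
  set Kc : ℝ := 2 * E / ν with hKcdef
  have hKcpos : 0 < Kc := by positivity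
  set G : Eu n → ℝ := fun v => g v - ⟪ξ, v - y⟫ + Kc * ‖v - y‖ ^ 2 with hGdef
  have hGc : Continuous G := by
    apply Continuous.add
    · exact hgc.sub (continuous_const.inner (continuous_id.sub continuous_const))
    · exact continuous_const.mul (((continuous_id.sub continuous_const).norm).pow 2)
  obtain ⟨z, hzball, hzmin⟩ := (isCompact_closedBall y (ρ/2)).exists_isMinOn
    (nonempty_closedBall.mpr (by positivity)) hGc.continuousOn
  have hmin : ∀ v ∈ closedBall y (ρ/2), G z ≤ G v := fun v hv => hzmin hv
  have hGy : G y = g y := by simp [hGdef]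
  have hGzy : G z ≤ g y := hGy ▸ hmin y (mem_closedBall_self (by positivity))
  have hzρ2 : ‖z - y‖ ≤ ρ/2 := by
    have := mem_closedBall.mp hzball; rwa [dist_eq_norm] at this
  have hzν : ‖z - y‖ ≤ ν/2 := by
    by_contra hcon
    push_neg at hcon
    have hzρ : ‖z - y‖ < ρ := by linarith
    have h2 := hball z hzρ
    have hGz : G z = g z - ⟪ξ, z - y⟫ + Kc * ‖z - y‖ ^ 2 := rfl
    have hgt : E < Kc * ‖z - y‖ := by
      have hKν : Kc * (ν/2) = E := by rw [hKcdef]; field_simp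
      rw [← hKν]
      exact mul_lt_mul_of_pos_left hcon hKcpos
    have hsq : ‖z - y‖ ^ 2 = ‖z - y‖ * ‖z - y‖ := sq ‖z - y‖
    have hD : E * ‖z - y‖ < Kc * (‖z - y‖ * ‖z - y‖) := by
      have h0 : 0 < ‖z - y‖ := (by positivity : (0:ℝ) < ν/2).trans hcon
      calc E * ‖z - y‖ < (Kc * ‖z - y‖) * ‖z - y‖ := by
            exact mul_lt_mul_of_pos_right hgt h0
      _ = Kc * (‖z - y‖ * ‖z - y‖) := by ring
    linarith [hGzy, h2, hGz, hD, hsq]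
  refine ⟨z, ξ - (2 * Kc) • (z - y), hzν.trans (by linarith), ?_, ?_⟩
  · have he : ξ - (2 * Kc) • (z - y) - ξ = -((2 * Kc) • (z - y)) := by abel
    rw [he, norm_neg, norm_smul, Real.norm_eq_abs, abs_of_pos (by positivity : (0:ℝ) < 2 * Kc)]
    calc 2 * Kc * ‖z - y‖ ≤ 2 * Kc * (ν/2) := by
          exact mul_le_mul_of_nonneg_left hzν (by positivity)
    _ = 2 * E := by rw [hKcdef]; field_simp
  · intro dd
    set σ : ℝ := ρ/2 - ‖z - y‖ with hσdef
    have hσpos : 0 < σ := by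
      have : ν/2 < ρ/2 := by linarith
      simp only [hσdef]; linarith
    have hev : ∀ᶠ s : ℝ in 𝓝[>] (0:ℝ),
        ⟪ξ - (2*Kc) • (z - y), dd⟫ - Kc * s * ‖dd‖ ^ 2 ≤ s⁻¹ * (g (z + s • dd) - g z) := by
      have hset : Ioo (0:ℝ) (σ / (‖dd‖ + 1)) ∈ 𝓝[>] (0:ℝ) :=
        Ioo_mem_nhdsGT_of_mem (by constructor <;> [rfl; positivity])
      filter_upwards [hset] with s hs
      obtain ⟨hs0, hsσ⟩ := hs
      have hsd : s * ‖dd‖ < σ := by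
        calc s * ‖dd‖ ≤ s * (‖dd‖ + 1) := by nlinarith [norm_nonneg dd]
        _ < σ := by rw [lt_div_iff₀ (by positivity)] at hsσ; linarith
      have hmem : z + s • dd ∈ closedBall y (ρ/2) := by
        rw [mem_closedBall, dist_eq_norm]
        have he2 : z + s • dd - y = (z - y) + s • dd := by abel
        rw [he2]
        calc ‖(z - y) + s • dd‖ ≤ ‖z - y‖ + ‖s • dd‖ := norm_add_le _ _
        _ = ‖z - y‖ + s * ‖dd‖ := by
              rw [norm_smul, Real.norm_eq_abs, abs_of_pos hs0]
        _ ≤ ρ/2 := by simp only [hσdef] at hsd ⊢; linarith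
      have hGineq := hmin _ hmem
      have hexp1 : ⟪ξ, z + s • dd - y⟫ = ⟪ξ, z - y⟫ + s * ⟪ξ, dd⟫ := by
        have : z + s • dd - y = (z - y) + s • dd := by abel
        rw [this, inner_add_right, real_inner_smul_right]
      have hexp2 : ‖z + s • dd - y‖ ^ 2
          = ‖z - y‖ ^ 2 + 2 * (s * ⟪z - y, dd⟫) + s ^ 2 * ‖dd‖ ^ 2 := by
        have he2 : z + s • dd - y = (z - y) + s • dd := by abel
        rw [he2, norm_add_sq_real, real_inner_smul_right]
        rw [norm_smul, Real.norm_eq_abs, abs_of_pos hs0, mul_pow]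
      have hGz2 : G z ≤ G (z + s • dd) := hGineq
      have hGzeq : G z = g z - ⟪ξ, z - y⟫ + Kc * ‖z - y‖ ^ 2 := rfl
      have hGseq : G (z + s • dd) = g (z + s • dd) - ⟪ξ, z + s • dd - y⟫
          + Kc * ‖z + s • dd - y‖ ^ 2 := rfl
      rw [hGzeq, hGseq, hexp1, hexp2] at hGz2
      have hζ : ⟪ξ - (2*Kc) • (z - y), dd⟫ = ⟪ξ, dd⟫ - 2*Kc*⟪z - y, dd⟫ := by
        rw [inner_sub_left, real_inner_smul_left]
      rw [hζ, le_inv_mul_iff₀ hs0]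
      nlinarith [hGz2]
    have hlhs : Tendsto (fun s : ℝ => ⟪ξ - (2*Kc) • (z - y), dd⟫ - Kc * s * ‖dd‖ ^ 2)
        (𝓝[>] (0:ℝ)) (𝓝 (⟪ξ - (2*Kc) • (z - y), dd⟫ - Kc * 0 * ‖dd‖ ^ 2)) := by
      apply Tendsto.mono_left _ nhdsWithin_le_nhds
      exact tendsto_const_nhds.sub (((continuous_const.mul continuous_id).mul continuous_const).tendsto 0)
    have hrhs := scal_dirDeriv hF' lam z dd
    have := le_of_tendsto_of_tendsto hlhs hrhs hev
    simpa using this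

lemma diniToRegNormal {n l : ℕ} {F : Eu n → Eu l} {F' : Eu n → Eu n → Eu l}
    (hLip : LocallyLipschitz F) (hF' : IsDirDeriv F F') (lam : Eu l) (z ζ : Eu n)
    (hdini : ∀ d, ⟪ζ, d⟫ ≤ ⟪lam, F' z d⟫) :
    pl2 ζ (-1) ∈ regNormal (epigraphSet fun y => ⟪lam, F y⟫) (pl2 z ⟪lam, F z⟫) := by
  obtain ⟨K, s, hs, hK⟩ := hLip z
  obtain ⟨r, hr, hballs⟩ := Metric.mem_nhds_iff.mp hs
  have hK' : LipschitzOnWith K F (ball z r) := hK.mono hballs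
  constructor
  · show (fun y => ⟪lam, F y⟫) z ≤ ⟪lam, F z⟫
    exact le_refl _
  · rintro w ⟨-, dk, tk, hdk, htkpos, htk0, hmemk⟩
    have hu : Tendsto (fun k => (dk k).fst) atTop (𝓝 w.fst) := wp_tendsto_fst hdk
    have hα : Tendsto (fun k => (dk k).snd) atTop (𝓝 w.snd) := wp_tendsto_snd hdk
    have hq : ∀ k, (tk k)⁻¹ * (⟪lam, F (z + tk k • (dk k).fst)⟫ - ⟪lam, F z⟫) ≤ (dk k).snd := by
      intro k
      have h2 : ⟪lam, F (z + tk k • (dk k).fst)⟫ ≤ ⟪lam, F z⟫ + tk k * (dk k).snd := hmemk k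
      rw [inv_mul_le_iff₀ (htkpos k)]
      linarith
    have hH := hadamard hF' lam hr hK' htkpos htk0 hu
    have hle : ⟪lam, F' z w.fst⟫ ≤ w.snd := le_of_tendsto_of_tendsto' hH hα hq
    rw [wp_inner_R]
    have e1 : (pl2 ζ (-1) : WithLp 2 (Eu n × ℝ)).fst = ζ := rfl
    have e2 : (pl2 ζ (-1) : WithLp 2 (Eu n × ℝ)).snd = -1 := rfl
    rw [e1, e2]
    have hcm : ⟪w.fst, ζ⟫ = ⟪ζ, w.fst⟫ := real_inner_comm _ _
    have := hdini w.fst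
    linarith



/-- Upper estimate for the limiting normal cone to the perturbed feasible set
`Z = {(x, δ) : F(x) - δ ∈ Γ}`. -/
theorem stmt2 {n l : ℕ}
    (F : Eu n → Eu l) (F' : Eu n → Eu n → Eu l)
    (hLip : LocallyLipschitz F) (hF' : IsDirDeriv F F')
    (Γ : Set (Eu l)) (hΓcl : IsClosed Γ)
    (Z : Set (WithLp 2 (Eu n × Eu l)))
    (hZ : Z = {p | F ((WithLp.equiv 2 (Eu n × Eu l)) p).1
            - ((WithLp.equiv 2 (Eu n × Eu l)) p).2 ∈ Γ})
    (x : Eu n) (δ : Eu l)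
    (hmem : (WithLp.equiv 2 (Eu n × Eu l)).symm (x, δ) ∈ Z) :
    limNormal Z ((WithLp.equiv 2 (Eu n × Eu l)).symm (x, δ)) ⊆
      {p | ∃ (ξ : Eu n) (lam : Eu l),
        p = (WithLp.equiv 2 (Eu n × Eu l)).symm (ξ, -lam) ∧
        ξ ∈ scalSubdiff F lam x ∧ lam ∈ limNormal Γ (F x - δ)} := by
  intro p hp
  obtain ⟨hzbar, pk, ηk, hpk, hηk, hreg⟩ := hp
  set lam : Eu l := -p.snd with hlamdef
  have hxkx : Tendsto (fun k => (pk k).fst) atTop (𝓝 x) := wp_tendsto_fst hpk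
  have hδkδ : Tendsto (fun k => (pk k).snd) atTop (𝓝 δ) := wp_tendsto_snd hpk
  have hξk : Tendsto (fun k => (ηk k).fst) atTop (𝓝 p.fst) := wp_tendsto_fst hηk
  have hlamk : Tendsto (fun k => -(ηk k).snd) atTop (𝓝 lam) := (wp_tendsto_snd hηk).neg
  have hZin : ∀ k, F (pk k).fst - (pk k).snd ∈ Γ := by
    intro k
    have h := (hreg k).1
    rw [hZ] at h
    exact h
  have hmemΓ : F x - δ ∈ Γ := by rw [hZ] at hmem; exact hmem
  -- Dini inequality from regular normals to Z
  have hDini : ∀ k u, ⟪(ηk k).fst, u⟫ ≤ ⟪-(ηk k).snd, F' (pk k).fst u⟫ := by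
    intro k u
    have htpos : ∀ j : ℕ, (0:ℝ) < 1/((j:ℝ)+1) := fun j => by positivity
    have ht0 : Tendsto (fun j : ℕ => 1/((j:ℝ)+1)) atTop (𝓝 0) := by
      simpa using tendsto_one_div_add_atTop_nhds_zero_nat (𝕜 := ℝ)
    have htI : Tendsto (fun j : ℕ => 1/((j:ℝ)+1)) atTop (𝓝[>] (0:ℝ)) :=
      tendsto_nhdsWithin_iff.mpr ⟨ht0, Eventually.of_forall htpos⟩
    have htan : (WithLp.equiv 2 (Eu n × Eu l)).symm (u, F' (pk k).fst u) ∈ tanCone Z (pk k) := by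
      refine ⟨(hreg k).1, fun j => (WithLp.equiv 2 (Eu n × Eu l)).symm
        (u, (1/((j:ℝ)+1))⁻¹ • (F ((pk k).fst + (1/((j:ℝ)+1)) • u) - F (pk k).fst)),
        fun j => 1/((j:ℝ)+1), ?_, htpos, ht0, ?_⟩
      · apply wp_tendsto_of
        · simp only [WithLp.equiv_symm_apply, WithLp.toLp_fst]
          exact tendsto_const_nhds
        · simp only [WithLp.equiv_symm_apply, WithLp.toLp_snd]
          exact (hF' (pk k).fst u).comp htI
      · intro j
        rw [hZ]
        show F ((pk k).fst + (1/((j:ℝ)+1)) • u)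
            - ((pk k).snd + (1/((j:ℝ)+1)) • ((1/((j:ℝ)+1))⁻¹ •
              (F ((pk k).fst + (1/((j:ℝ)+1)) • u) - F (pk k).fst))) ∈ Γ
        rw [smul_inv_smul₀ (ne_of_gt (htpos j))]
        have he : F ((pk k).fst + (1/((j:ℝ)+1)) • u)
            - ((pk k).snd + (F ((pk k).fst + (1/((j:ℝ)+1)) • u) - F (pk k).fst))
            = F (pk k).fst - (pk k).snd := by abel
        rw [he]
        exact hZin k
    have h0 := (hreg k).2 _ htan
    rw [wp_inner] at h0
    simp only [WithLp.equiv_symm_apply, WithLp.toLp_fst, WithLp.toLp_snd] at h0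
    have hcm1 : ⟪u, (ηk k).fst⟫ = ⟪(ηk k).fst, u⟫ := real_inner_comm _ _
    have hcm2 : ⟪F' (pk k).fst u, (ηk k).snd⟫ = -⟪-(ηk k).snd, F' (pk k).fst u⟫ := by
      rw [inner_neg_left, neg_neg, real_inner_comm]
    linarith
  refine ⟨p.fst, lam, ?_, ?_, ?_⟩
  · rw [hlamdef, neg_neg]
    rfl
  · -- subdifferential part
    obtain ⟨K, s, hsnb, hKs⟩ := hLip x
    obtain ⟨ρ, hρ, hballs⟩ := Metric.mem_nhds_iff.mp hsnb
    have hKx : LipschitzOnWith K F (ball x ρ) := hKs.mono hballs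
    have hNev : ∀ᶠ k in atTop, ‖(pk k).fst - x‖ < ρ/2 := by
      filter_upwards [hxkx.eventually (Metric.ball_mem_nhds x
        (by positivity : (0:ℝ) < ρ/2))] with k hk
      rw [← dist_eq_norm]
      exact hk
    obtain ⟨N, hN⟩ := eventually_atTop.mp hNev
    have key : ∀ m : ℕ, ∃ z ζ : Eu n, ‖z - (pk (m+N)).fst‖ ≤ 1/((m:ℝ)+1) ∧
        ‖ζ - (ηk (m+N)).fst‖ ≤ 2 * (‖-(ηk (m+N)).snd - lam‖ * (K:ℝ) + 1/((m:ℝ)+1)) ∧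
        pl2 ζ (-1) ∈ regNormal (epigraphSet fun y => ⟪lam, F y⟫) (pl2 z ⟪lam, F z⟫) := by
      intro m
      set k := m + N with hkdef
      set y := (pk k).fst with hydef
      have hρ2 : (0:ℝ) < ρ/2 := by positivity
      have hyK : LipschitzOnWith K F (ball y (ρ/2)) := by
        apply hKx.mono
        apply ball_subset_ball'
        have hk := hN k (Nat.le_add_left N m)
        rw [dist_eq_norm]
        linarith
      set cm : ℝ := ‖-(ηk k).snd - lam‖ * (K:ℝ) with hcmdef
      have hcm0 : 0 ≤ cm := by positivity
      have hdini1 : ∀ u, ⟪(ηk k).fst, u⟫ ≤ ⟪lam, F' y u⟫ + cm * ‖u‖ := by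
        intro u
        have h1 := hDini k u
        have h2 : ⟪-(ηk k).snd, F' y u⟫ = ⟪lam, F' y u⟫ + ⟪-(ηk k).snd - lam, F' y u⟫ := by
          rw [inner_sub_left]; ring
        have h3 : ⟪-(ηk k).snd - lam, F' y u⟫ ≤ ‖-(ηk k).snd - lam‖ * ‖F' y u‖ :=
          real_inner_le_norm _ _
        have h4 : ‖F' y u‖ ≤ (K:ℝ) * ‖u‖ := dirDeriv_norm_le hF' hρ2 hyK u
        have h5 : ‖-(ηk k).snd - lam‖ * ‖F' y u‖ ≤ ‖-(ηk k).snd - lam‖ * ((K:ℝ) * ‖u‖) :=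
          mul_le_mul_of_nonneg_left h4 (norm_nonneg _)
        have h6 : cm * ‖u‖ = ‖-(ηk k).snd - lam‖ * ((K:ℝ) * ‖u‖) := by rw [hcmdef]; ring
        linarith
      have hεm : (0:ℝ) < 1/((m:ℝ)+1) := by positivity
      obtain ⟨ρm, hρm, hballm⟩ := epsFrechet hF' lam hρ2 hyK ((ηk k).fst) hεm hdini1
      have hEm : (0:ℝ) < cm + 1/((m:ℝ)+1) := by linarith
      have hνpos : (0:ℝ) < min (1/((m:ℝ)+1)) (ρm/2) := lt_min hεm (by positivity)
      have hνρm : min (1/((m:ℝ)+1)) (ρm/2) < ρm :=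
        lt_of_le_of_lt (min_le_right _ _) (by linarith)
      obtain ⟨z, ζ, hz1, hz2, hz3⟩ :=
        penal hLip hF' lam y ((ηk k).fst) hEm hρm hballm hνpos hνρm
      exact ⟨z, ζ, hz1.trans (min_le_left _ _), hz2,
        diniToRegNormal hLip hF' lam z ζ hz3⟩
    choose zz ζζ hzz1 hzz2 hzz3 using key
    have hNshift : Tendsto (fun m : ℕ => m + N) atTop atTop := tendsto_add_atTop_nat N
    have hone : Tendsto (fun m : ℕ => 1/((m:ℝ)+1)) atTop (𝓝 0) := by
      simpa using tendsto_one_div_add_atTop_nhds_zero_nat (𝕜 := ℝ)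
    have hzx : Tendsto zz atTop (𝓝 x) := by
      rw [tendsto_iff_norm_sub_tendsto_zero]
      have hb0 : Tendsto (fun m : ℕ => 1/((m:ℝ)+1) + ‖(pk (m+N)).fst - x‖) atTop (𝓝 0) := by
        have h2 : Tendsto (fun m : ℕ => ‖(pk (m+N)).fst - x‖) atTop (𝓝 0) :=
          tendsto_iff_norm_sub_tendsto_zero.mp (hxkx.comp hNshift)
        simpa using hone.add h2
      apply squeeze_zero (fun m => norm_nonneg _) _ hb0
      intro m
      have he : zz m - x = (zz m - (pk (m+N)).fst) + ((pk (m+N)).fst - x) := by abel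
      rw [he]
      exact (norm_add_le _ _).trans (add_le_add_left (hzz1 m) _)
    have hgz : Tendsto (fun m => ⟪lam, F (zz m)⟫) atTop (𝓝 ⟪lam, F x⟫) :=
      ((continuous_const.inner hLip.continuous).tendsto x).comp hzx
    have hζξ : Tendsto ζζ atTop (𝓝 p.fst) := by
      rw [tendsto_iff_norm_sub_tendsto_zero]
      have hb0 : Tendsto (fun m : ℕ =>
          2 * (‖-(ηk (m+N)).snd - lam‖ * (K:ℝ) + 1/((m:ℝ)+1)) + ‖(ηk (m+N)).fst - p.fst‖)
          atTop (𝓝 0) := by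
        have h1 : Tendsto (fun m : ℕ => ‖-(ηk (m+N)).snd - lam‖) atTop (𝓝 0) :=
          tendsto_iff_norm_sub_tendsto_zero.mp (hlamk.comp hNshift)
        have h2 : Tendsto (fun m : ℕ => ‖(ηk (m+N)).fst - p.fst‖) atTop (𝓝 0) :=
          tendsto_iff_norm_sub_tendsto_zero.mp (hξk.comp hNshift)
        have h3 : Tendsto (fun m : ℕ => ‖-(ηk (m+N)).snd - lam‖ * (K:ℝ)) atTop (𝓝 0) := by
          simpa using h1.mul_const (K:ℝ)
        have h4 := ((h3.add hone).const_mul (2:ℝ)).add h2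
        simpa using h4
      apply squeeze_zero (fun m => norm_nonneg _) _ hb0
      intro m
      have he : ζζ m - p.fst = (ζζ m - (ηk (m+N)).fst) + ((ηk (m+N)).fst - p.fst) := by abel
      rw [he]
      exact (norm_add_le _ _).trans (add_le_add_left (hzz2 m) _)
    show pl2 p.fst (-1) ∈ limNormal (epigraphSet fun y => ⟪lam, F y⟫) (pl2 x ⟪lam, F x⟫)
    refine ⟨?_, fun m => pl2 (zz m) ⟪lam, F (zz m)⟫, fun m => pl2 (ζζ m) (-1), ?_, ?_, hzz3⟩
    · show (fun y => ⟪lam, F y⟫) x ≤ ⟪lam, F x⟫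
      exact le_refl _
    · exact wp_tendsto_of hzx hgz
    · exact wp_tendsto_of hζξ tendsto_const_nhds
  · -- normal cone to Γ part
    refine ⟨hmemΓ, fun k => F (pk k).fst - (pk k).snd, fun k => -(ηk k).snd, ?_, hlamk, ?_⟩
    · exact ((hLip.continuous.tendsto x).comp hxkx).sub hδkδ
    · intro k
      refine ⟨hZin k, ?_⟩
      rintro w ⟨hwmem, wj, sj, hwj, hsjpos, hsj0, hwin⟩
      have htan : (WithLp.equiv 2 (Eu n × Eu l)).symm (0, -w) ∈ tanCone Z (pk k) := by
        refine ⟨(hreg k).1, fun j => (WithLp.equiv 2 (Eu n × Eu l)).symm (0, -(wj j)),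
          sj, ?_, hsjpos, hsj0, ?_⟩
        · apply wp_tendsto_of
          · simp only [WithLp.equiv_symm_apply, WithLp.toLp_fst]
            exact tendsto_const_nhds
          · simp only [WithLp.equiv_symm_apply, WithLp.toLp_snd]
            exact hwj.neg
        · intro j
          rw [hZ]
          show F ((pk k).fst + sj j • 0) - ((pk k).snd + sj j • (-(wj j))) ∈ Γ
          rw [smul_zero, add_zero]
          have he : F (pk k).fst - ((pk k).snd + sj j • (-(wj j)))
              = F (pk k).fst - (pk k).snd + sj j • wj j := by
            rw [smul_neg]; abel
          rw [he]
          exact hwin j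
      have h0 := (hreg k).2 _ htan
      rw [wp_inner] at h0
      simp only [WithLp.equiv_symm_apply, WithLp.toLp_fst, WithLp.toLp_snd] at h0
      rw [inner_zero_left, inner_neg_left] at h0
      rw [inner_neg_right]
      linarith

end
end

section
/- Let f : ℝ^n → ℝ be continuously differentiable, let X ⊂ ℝ^n be nonempty and closed, and let x̄ ∈ X satisfy ∇f(x̄)^T d > 0 for all d ∈ T_X(x̄) \ {0}. Then x̄ is a strict local minimizer of f over X, i.e., there is a neighborhood U of x̄ such that f(x) > f(x̄) for all x ∈ (X ∩ U) \ {x̄}. -/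
open Filter Topology Metric Set
open scoped RealInnerProductSpace Pointwise

noncomputable section

/-- Primal first-order sufficient optimality condition for a strict local minimizer. -/
theorem stmt4 {n : ℕ} (f : Eu n → ℝ) (hf : ContDiff ℝ 1 f)
    (X : Set (Eu n)) (hne : X.Nonempty) (hcl : IsClosed X)
    (x : Eu n) (hx : x ∈ X)
    (hpos : ∀ d ∈ tanCone X x, d ≠ 0 → 0 < ⟪gradient f x, d⟫) :
    ∃ U ∈ 𝓝 x, ∀ y ∈ X ∩ U, y ≠ x → f x < f y := by
  by_contra h
  push_neg at h
  have hseq : ∀ k : ℕ, ∃ z, z ∈ X ∧ z ∈ ball x (1/(k+1)) ∧ z ≠ x ∧ f z ≤ f x := by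
    intro k
    obtain ⟨z, ⟨hzX, hzb⟩, hzne, hzf⟩ :=
      h (ball x (1/(k+1))) (ball_mem_nhds _ (by positivity))
    exact ⟨z, hzX, hzb, hzne, hzf⟩
  choose y hyX hyb hyne hyf using hseq
  have hylim : Tendsto y atTop (𝓝 x) := by
    have h1 : Tendsto (fun k : ℕ => (1:ℝ)/(k+1)) atTop (𝓝 0) :=
      tendsto_one_div_add_atTop_nhds_zero_nat
    exact tendsto_iff_dist_tendsto_zero.2
      (squeeze_zero (fun k => dist_nonneg) (fun k => (mem_ball.1 (hyb k)).le) h1)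
  set t : ℕ → ℝ := fun k => ‖y k - x‖ with ht
  have htpos : ∀ k, 0 < t k := fun k => norm_pos_iff.2 (sub_ne_zero.2 (hyne k))
  have htlim : Tendsto t atTop (𝓝 0) := by
    have h2 := tendsto_iff_dist_tendsto_zero.1 hylim
    simpa [ht, dist_eq_norm] using h2
  set dk : ℕ → Eu n := fun k => (t k)⁻¹ • (y k - x) with hdk
  have hdknorm : ∀ k, ‖dk k‖ = 1 := by
    intro k
    rw [hdk]
    simp only [norm_smul, norm_inv, Real.norm_eq_abs, abs_of_pos (htpos k)]
    exact inv_mul_cancel₀ (htpos k).ne'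
  have hmem : ∀ k, dk k ∈ sphere (0 : Eu n) 1 := by
    intro k; simp [mem_sphere_iff_norm, hdknorm k]
  obtain ⟨d, hdcl, φ, hφ, hdlim⟩ :=
    tendsto_subseq_of_bounded (isBounded_sphere (x := (0:Eu n)) (r := 1)) hmem
  have hdne : d ≠ 0 := by
    have : d ∈ sphere (0:Eu n) 1 := by
      rwa [(isClosed_sphere).closure_eq] at hdcl
    intro h0
    rw [h0] at this
    simp [mem_sphere_iff_norm] at this
  have hrec : ∀ k, x + t (φ k) • dk (φ k) = y (φ k) := by
    intro k
    simp [hdk, smul_smul, mul_inv_cancel₀ (htpos (φ k)).ne']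
  have hdT : d ∈ tanCone X x := by
    refine ⟨hx, fun k => dk (φ k), fun k => t (φ k), hdlim, fun k => htpos (φ k),
      htlim.comp hφ.tendsto_atTop, fun k => ?_⟩
    rw [hrec k]; exact hyX (φ k)
  have hgrad : HasGradientAt f (gradient f x) x :=
    ((hf.differentiable one_ne_zero) x).hasGradientAt
  set g := gradient f x with hg
  have hlo : (fun x' : Eu n => f x' - f x - ⟪g, x' - x⟫) =o[𝓝 x] fun x' => x' - x :=
    hasGradientAt_iff_isLittleO.1 hgrad
  have hcomp : (fun k => f (y k) - f x - ⟪g, y k - x⟫) =o[atTop] fun k => y k - x :=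
    hlo.comp_tendsto hylim
  have hr : Tendsto (fun k => (f (y k) - f x - ⟪g, y k - x⟫) / t k) atTop (𝓝 0) := by
    have := (hcomp.norm_right).tendsto_div_nhds_zero
    simpa [ht] using this
  -- key inequality
  have hineq : ∀ k, ⟪g, dk k⟫ ≤ -((f (y k) - f x - ⟪g, y k - x⟫) / t k) := by
    intro k
    have hy' : y k - x = t k • dk k := by
      simp [hdk, smul_smul, mul_inv_cancel₀ (htpos k).ne']
    have h1 : ⟪g, y k - x⟫ = t k * ⟪g, dk k⟫ := by
      rw [hy', real_inner_smul_right]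
    rw [h1]
    have hfk : f (y k) - f x ≤ 0 := sub_nonpos.2 (hyf k)
    rw [le_neg, div_le_iff₀ (htpos k)]
    nlinarith [htpos k]
  have hinnerlim : Tendsto (fun k => ⟪g, dk (φ k)⟫) atTop (𝓝 ⟪g, d⟫) :=
    ((continuous_const.inner continuous_id).tendsto d).comp hdlim
  have hrφ : Tendsto (fun k => -((f (y (φ k)) - f x - ⟪g, y (φ k) - x⟫) / t (φ k)))
      atTop (𝓝 0) := by
    have := (hr.comp hφ.tendsto_atTop).neg
    simpa using this
  have hle : ⟪g, d⟫ ≤ 0 :=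
    le_of_tendsto_of_tendsto' hinnerlim hrφ (fun k => hineq (φ k))
  exact absurd (hpos d hdT hdne) (not_lt.2 hle)

end
end

section
/- Let f : ℝ^n → ℝ be continuously differentiable, let X ⊂ ℝ^n be nonempty and closed, and let x̄ ∈ X be a local minimizer of f over X. Then (i) −∇f(x̄) ∈ N̂_X(x̄), and (ii) for every d ∈ Ĉ(x̄) with ‖d‖ = 1 one has −∇f(x̄) ∈ N_X(x̄; d). -/
open Filter Topology Metric Set
open scoped RealInnerProductSpace Pointwise

noncomputable section

section Helpers

open InnerProductSpace

variable {H : Type*} [NormedAddCommGroup H] [InnerProductSpace ℝ H] [CompleteSpace H]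

/-- Directional limit of difference quotients from a gradient. -/
lemma grad_lim {g : H → ℝ} {G y : H} (hG : HasGradientAt g G y)
    {dk : ℕ → H} {tk : ℕ → ℝ} {v : H}
    (hdk : Tendsto dk atTop (𝓝 v)) (htp : ∀ k, 0 < tk k)
    (ht0 : Tendsto tk atTop (𝓝 0)) :
    Tendsto (fun k => (tk k)⁻¹ * (g (y + tk k • dk k) - g y)) atTop (𝓝 ⟪G, v⟫) := by
  have hF : HasFDerivAt g (toDual ℝ H G) y := hG.hasFDerivAt
  have htpos : Tendsto tk atTop (𝓝[>] (0 : ℝ)) :=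
    tendsto_nhdsWithin_of_tendsto_nhds_of_eventually_within _ ht0
      (Filter.Eventually.of_forall htp)
  have clim : Tendsto (fun k => ‖(tk k)⁻¹‖) atTop atTop := by
    have h1 : Tendsto (fun k => (tk k)⁻¹) atTop atTop :=
      tendsto_inv_nhdsGT_zero.comp htpos
    refine h1.congr fun k => ?_
    rw [Real.norm_eq_abs, abs_of_pos (inv_pos.2 (htp k))]
  have cdlim : Tendsto (fun k => (tk k)⁻¹ • tk k • dk k) atTop (𝓝 v) := by
    refine hdk.congr fun k => ?_
    rw [inv_smul_smul₀ (htp k).ne']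
  have := hF.hasFDerivWithinAt.lim (s := Set.univ) (l := atTop) (by simpa using ht0.smul hdk)
    (Filter.Eventually.of_forall fun k => Set.mem_univ _) cdlim
  simpa [toDual_apply_apply, smul_eq_mul] using this

/-- A local minimizer gives minus the gradient in the regular normal cone. -/
lemma locMin_regNormal {g : H → ℝ} {G : H} {X : Set H} {y : H} (hy : y ∈ X)
    (hG : HasGradientAt g G y) (hm : IsLocalMinOn g X y) : -G ∈ regNormal X y := by
  refine ⟨hy, fun v hv => ?_⟩
  obtain ⟨-, dk, tk, hdk, htp, ht0, hmem⟩ := hv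
  have hlim := grad_lim hG hdk htp ht0
  have htend : Tendsto (fun k => y + tk k • dk k) atTop (𝓝[X] y) := by
    refine tendsto_nhdsWithin_of_tendsto_nhds_of_eventually_within _ ?_
      (Filter.Eventually.of_forall hmem)
    have h0 : Tendsto (fun k => tk k • dk k) atTop (𝓝 ((0 : ℝ) • v)) := ht0.smul hdk
    simpa using tendsto_const_nhds.add h0
  have hev : ∀ᶠ k in atTop, g y ≤ g (y + tk k • dk k) := htend.eventually hm
  have h0 : (0 : ℝ) ≤ ⟪G, v⟫ := by
    refine ge_of_tendsto hlim ?_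
    filter_upwards [hev] with k hk
    exact mul_nonneg (inv_nonneg.2 (htp k).le) (by linarith)
  rw [inner_neg_right, real_inner_comm]
  linarith

/-- Gradient of the squared distance to a point. -/
lemma hasGradientAt_normSq (a y : H) :
    HasGradientAt (fun z => ‖z - a‖ ^ 2) ((2 : ℝ) • (y - a)) y := by
  rw [hasGradientAt_iff_hasFDerivAt]
  have h1 : HasFDerivAt (fun z : H => z - a) (ContinuousLinearMap.id ℝ H) y :=
    (hasFDerivAt_id y).sub_const a
  have h2 := h1.inner (𝕜 := ℝ) h1
  have heq : (fun z : H => ‖z - a‖ ^ 2) = fun z => ⟪z - a, z - a⟫ := by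
    funext z; rw [real_inner_self_eq_norm_sq]
  rw [heq]
  refine h2.congr_fderiv ?_
  ext w
  simp [toDual_apply_apply, fderivInnerCLM_apply, real_inner_smul_left, inner_sub_left,
    inner_sub_right, real_inner_comm]
  ring

end Helpers

/-- Dual first-order necessary optimality conditions. -/
theorem stmt5 {n : ℕ} (f : Eu n → ℝ) (hf : ContDiff ℝ 1 f)
    (X : Set (Eu n)) (hne : X.Nonempty) (hcl : IsClosed X)
    (x : Eu n) (hx : x ∈ X) (hmin : IsLocalMinOn f X x) :
    -gradient f x ∈ regNormal X x ∧
    ∀ d : Eu n, ⟪gradient f x, d⟫ ≤ 0 → d ∈ tanCone X x → ‖d‖ = 1 →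
      -gradient f x ∈ dirLimNormal X x d := by
  have hfd : Differentiable ℝ f := hf.differentiable one_ne_zero
  have hreg : -gradient f x ∈ regNormal X x :=
    locMin_regNormal hx (hfd x).hasGradientAt hmin
  refine ⟨hreg, ?_⟩
  intro d hd0 hdt hdn
  obtain ⟨-, dk, tk, hdk, htp, ht0, hmem⟩ := id hdt
  have hcrit : ⟪gradient f x, d⟫ = 0 := by
    have h := hreg.2 d hdt
    rw [inner_neg_right, real_inner_comm] at h
    linarith
  obtain ⟨r, hr, hrmin⟩ : ∃ r, 0 < r ∧ ∀ ⦃y⦄, y ∈ ball x r ∩ X → f x ≤ f y :=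
    (Metric.nhdsWithin_basis_ball.eventually_iff).1 hmin
  set a : ℕ → Eu n := fun k => x + tk k • dk k with ha
  set K : Set (Eu n) := X ∩ closedBall x (r / 2) with hKdef
  have hKc : IsCompact K := (isCompact_closedBall x (r / 2)).inter_left hcl
  have hKne : K.Nonempty := ⟨x, hx, mem_closedBall_self (by positivity)⟩
  have hmin3 : ∀ k : ℕ, ∃ z ∈ K, IsMinOn (fun y => f y + (tk k)⁻¹ * ‖y - a k‖ ^ 2) K z :=
    fun k => hKc.exists_isMinOn hKne
      ((hf.continuous.add (continuous_const.mul
        (((continuous_id.sub continuous_const).norm).pow 2))).continuousOn)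
  choose xk hxkK hxkmin using hmin3
  have hxX : ∀ k, xk k ∈ X := fun k => (hxkK k).1
  have hxB : ∀ k, dist (xk k) x ≤ r / 2 := fun k => (hxkK k).2
  have haX : ∀ k, a k ∈ X := fun k => by simp only [ha]; exact hmem k
  have helim : Tendsto (fun k => (tk k)⁻¹ * (f (a k) - f x)) atTop (𝓝 0) := by
    have h := grad_lim (hfd x).hasGradientAt hdk htp ht0
    rw [hcrit] at h
    simpa only [ha] using h
  set b : ℕ → ℝ := fun k => (tk k)⁻¹ * ‖xk k - a k‖ with hb
  have hbnn : ∀ k, 0 ≤ b k := fun k =>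
    mul_nonneg (inv_nonneg.2 (htp k).le) (norm_nonneg _)
  have haK : ∀ᶠ k in atTop, a k ∈ K := by
    have hsm : Tendsto (fun k => tk k • dk k) atTop (𝓝 0) := by
      simpa using ht0.smul hdk
    have h2 := hsm (Metric.closedBall_mem_nhds (0 : Eu n) (by positivity : (0:ℝ) < r / 2))
    filter_upwards [h2] with k hk
    refine ⟨haX k, mem_closedBall.2 ?_⟩
    have h3 : ‖tk k • dk k‖ ≤ r / 2 := by
      simpa using mem_closedBall_zero_iff.1 hk
    rw [dist_eq_norm]
    simpa [ha, add_sub_cancel_left] using h3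
  have hb2 : ∀ᶠ k in atTop, b k ^ 2 ≤ (tk k)⁻¹ * (f (a k) - f x) := by
    filter_upwards [haK] with k hk
    have h1 : f (xk k) + (tk k)⁻¹ * ‖xk k - a k‖ ^ 2 ≤ f (a k) := by
      have h := hxkmin k hk
      simpa using h
    have h2 : f x ≤ f (xk k) := by
      refine hrmin ⟨mem_ball.2 (lt_of_le_of_lt (hxB k) (by linarith)), hxX k⟩
    have h3 : (tk k)⁻¹ * ‖xk k - a k‖ ^ 2 ≤ f (a k) - f x := by linarith
    have h4 : (tk k)⁻¹ * ((tk k)⁻¹ * ‖xk k - a k‖ ^ 2) ≤ (tk k)⁻¹ * (f (a k) - f x) :=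
      mul_le_mul_of_nonneg_left h3 (inv_nonneg.2 (htp k).le)
    calc b k ^ 2 = (tk k)⁻¹ * ((tk k)⁻¹ * ‖xk k - a k‖ ^ 2) := by
          simp only [hb]; ring
      _ ≤ (tk k)⁻¹ * (f (a k) - f x) := h4
  have hb0 : Tendsto b atTop (𝓝 0) := by
    have hsq : Tendsto (fun k => b k ^ 2) atTop (𝓝 0) :=
      squeeze_zero' (Filter.Eventually.of_forall fun k => sq_nonneg _) hb2 helim
    have h := hsq.sqrt
    have heq : (fun k => Real.sqrt (b k ^ 2)) = b := funext fun k => Real.sqrt_sq (hbnn k)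
    rw [heq] at h
    simpa using h
  set d' : ℕ → Eu n := fun k => (tk k)⁻¹ • (xk k - x) with hd'
  have hxeq : ∀ k, x + tk k • d' k = xk k := by
    intro k
    simp [hd', smul_smul, mul_inv_cancel₀ (htp k).ne']
  have hnd : ∀ k, ‖d' k - dk k‖ = b k := by
    intro k
    have h1 : d' k - dk k = (tk k)⁻¹ • (xk k - a k) := by
      have h2 : xk k - a k = (xk k - x) - tk k • dk k := by
        simp only [ha]; abel
      rw [h2, smul_sub, inv_smul_smul₀ (htp k).ne']
    rw [h1, norm_smul, Real.norm_eq_abs, abs_of_pos (inv_pos.2 (htp k))]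
  have hd'lim : Tendsto d' atTop (𝓝 d) := by
    have h0 : Tendsto (fun k => d' k - dk k) atTop (𝓝 0) :=
      squeeze_zero_norm (fun k => (hnd k).le) hb0
    have h1 := h0.add hdk
    simpa using h1
  have hxlim : Tendsto xk atTop (𝓝 x) := by
    have h1 : Tendsto (fun k => x + tk k • d' k) atTop (𝓝 (x + (0 : ℝ) • d)) :=
      tendsto_const_nhds.add (ht0.smul hd'lim)
    simpa [hxeq] using h1
  have hgradcont : Continuous fun y => gradient f y := by
    have h1 : Continuous (fun y => fderiv ℝ f y) := hf.continuous_fderiv one_ne_zero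
    exact (InnerProductSpace.toDual ℝ (Eu n)).symm.continuous.comp h1
  set η : ℕ → Eu n := fun k =>
    -(gradient f (xk k) + (tk k)⁻¹ • ((2 : ℝ) • (xk k - a k))) with hη
  have hsec : Tendsto (fun k => (tk k)⁻¹ • ((2 : ℝ) • (xk k - a k))) atTop (𝓝 0) := by
    refine squeeze_zero_norm (a := fun k => 2 * b k) (fun k => ?_) ?_
    · rw [norm_smul, norm_smul, Real.norm_eq_abs, Real.norm_eq_abs,
        abs_of_pos (inv_pos.2 (htp k))]
      simp only [hb, abs_two]
      ring_nf
      exact le_rfl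
    · simpa using hb0.const_mul 2
  have hηlim : Tendsto η atTop (𝓝 (-gradient f x)) := by
    have h1 : Tendsto (fun k => gradient f (xk k)) atTop (𝓝 (gradient f x)) :=
      (hgradcont.tendsto x).comp hxlim
    have h2 := (h1.add hsec).neg
    simpa [hη] using h2
  have hP : ∀ᶠ k in atTop, η k ∈ regNormal X (xk k) := by
    filter_upwards [hxlim (Metric.ball_mem_nhds x (by positivity : (0:ℝ) < r / 2))] with k hk
    have hkb : dist (xk k) x < r / 2 := mem_ball.1 hk
    have hloc : IsLocalMinOn (fun y => f y + (tk k)⁻¹ * ‖y - a k‖ ^ 2) X (xk k) := by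
      refine (Metric.nhdsWithin_basis_ball.eventually_iff).2
        ⟨r / 2 - dist (xk k) x, by linarith, ?_⟩
      rintro y ⟨hyb, hyX⟩
      refine hxkmin k ⟨hyX, mem_closedBall.2 ?_⟩
      have h5 := mem_ball.1 hyb
      calc dist y x ≤ dist y (xk k) + dist (xk k) x := dist_triangle _ _ _
        _ ≤ r / 2 := by linarith
    have hga : HasGradientAt (fun y => f y + (tk k)⁻¹ * ‖y - a k‖ ^ 2)
        (gradient f (xk k) + (tk k)⁻¹ • ((2 : ℝ) • (xk k - a k))) (xk k) := by
      have hA : HasFDerivAt f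
          (InnerProductSpace.toDual ℝ (Eu n) (gradient f (xk k))) (xk k) :=
        ((hfd (xk k)).hasGradientAt).hasFDerivAt
      have hB := (hasGradientAt_normSq (a k) (xk k)).hasFDerivAt
      have hC := hA.add (hB.const_mul ((tk k)⁻¹))
      rw [hasGradientAt_iff_hasFDerivAt]
      refine hC.congr_fderiv ?_
      ext w
      simp [InnerProductSpace.toDual_apply_apply, inner_add_left, real_inner_smul_left,
        inner_smul_right]
    have hmem' := locMin_regNormal (hxX k) hga hloc
    simpa [hη] using hmem'
  obtain ⟨N, hN⟩ := eventually_atTop.1 hP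
  refine ⟨hx, fun k => d' (k + N), fun k => tk (k + N), fun k => η (k + N),
    hd'lim.comp (tendsto_add_atTop_nat N), fun k => htp _,
    ht0.comp (tendsto_add_atTop_nat N), hηlim.comp (tendsto_add_atTop_nat N), ?_⟩
  intro k
  rw [hxeq (k + N)]
  exact hN (k + N) (Nat.le_add_left N k)


end
end

section
/- Every local minimizer x̄ of (P) is AM-stationary. -/
open Filter Topology Metric Set
open scoped RealInnerProductSpace Pointwise

noncomputable section

section AuxLemmas
open Asymptotics

lemma slope_tendsto {H : Type*} [NormedAddCommGroup H] [NormedSpace ℝ H]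
    (h : H → ℝ) (g' : H →L[ℝ] ℝ) (x : H) (hd : HasFDerivAt h g' x)
    (t : ℕ → ℝ) (a : ℕ → H) (aa : H) (ht : ∀ k, 0 < t k) (ht0 : Tendsto t atTop (𝓝 0))
    (ha : Tendsto a atTop (𝓝 aa)) :
    Tendsto (fun k => (h (x + t k • a k) - h x) / t k) atTop (𝓝 (g' aa)) := by
  have hv : Tendsto (fun k => t k • a k) atTop (𝓝 0) := by
    simpa using ht0.smul ha
  have hy : Tendsto (fun k => x + t k • a k) atTop (𝓝 x) := by
    simpa using tendsto_const_nhds.add hv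
  have hlo : (fun y => h y - h x - g' (y - x)) =o[𝓝 x] fun y => y - x :=
    hd.isLittleO
  have hlo2 : (fun k => h (x + t k • a k) - h x - g' (t k • a k)) =o[atTop]
      fun k => t k • a k := by
    have := hlo.comp_tendsto hy
    simpa only [Function.comp_def, add_sub_cancel_left] using this
  obtain ⟨C, hC⟩ : ∃ C, ∀ᶠ k in atTop, ‖a k‖ ≤ C :=
    ⟨‖aa‖ + 1, ha.norm.eventually (eventually_le_nhds (lt_add_one _))⟩
  have hbigO : (fun k => t k • a k) =O[atTop] t := by
    rw [isBigO_iff]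
    refine ⟨C, ?_⟩
    filter_upwards [hC] with k hk
    rw [norm_smul, Real.norm_eq_abs, abs_of_pos (ht k)]
    nlinarith [ht k]
  have hlo3 : (fun k => h (x + t k • a k) - h x - g' (t k • a k)) =o[atTop] t :=
    hlo2.trans_isBigO hbigO
  have hq : Tendsto (fun k => (h (x + t k • a k) - h x - g' (t k • a k)) / t k)
      atTop (𝓝 0) := by
    rw [← isLittleO_iff_tendsto]
    · exact hlo3
    · intro k hk; exact absurd hk (ne_of_gt (ht k))
  have hg : Tendsto (fun k => g' (a k)) atTop (𝓝 (g' aa)) :=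
    (g'.continuous.tendsto aa).comp ha
  have htot : Tendsto
      (fun k => (h (x + t k • a k) - h x - g' (t k • a k)) / t k + g' (a k))
      atTop (𝓝 (0 + g' aa)) := hq.add hg
  rw [zero_add] at htot
  refine htot.congr (fun k => ?_)
  have hne := ne_of_gt (ht k)
  rw [map_smul]
  field_simp
  ring

lemma regNormal_subset_limNormal {H : Type*} [NormedAddCommGroup H]
    [InnerProductSpace ℝ H] (Ω : Set H) (x : H) : regNormal Ω x ⊆ limNormal Ω x :=
  fun η hη => ⟨hη.1, fun _ => x, fun _ => η, tendsto_const_nhds, tendsto_const_nhds,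
    fun _ => hη⟩

lemma proj_mem_regNormal {H : Type*} [NormedAddCommGroup H] [InnerProductSpace ℝ H]
    (Γ : Set H) (u z : H) (hz : z ∈ Γ) (hmin : ∀ w ∈ Γ, dist u z ≤ dist u w)
    (c : ℝ) (hc : 0 ≤ c) : c • (u - z) ∈ regNormal Γ z := by
  refine ⟨hz, fun v hv => ?_⟩
  obtain ⟨-, dk, tk, hdk, htk, ht0, hin⟩ := hv
  have key : ∀ k, ⟪u - z, dk k⟫ ≤ tk k * ‖dk k‖ ^ 2 / 2 := by
    intro k
    have h1 : dist u z ≤ dist u (z + tk k • dk k) := hmin _ (hin k)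
    rw [dist_eq_norm, dist_eq_norm] at h1
    have h2 : u - (z + tk k • dk k) = (u - z) - tk k • dk k := by abel
    rw [h2] at h1
    have h3 : ‖u - z‖ ^ 2 ≤ ‖(u - z) - tk k • dk k‖ ^ 2 := by
      have := norm_nonneg (u - z); nlinarith
    have e1 : ‖(u - z) - tk k • dk k‖ ^ 2
        = ‖u - z‖ ^ 2 - 2 * (tk k * ⟪u - z, dk k⟫) + tk k ^ 2 * ‖dk k‖ ^ 2 := by
      rw [norm_sub_sq_real (u - z) (tk k • dk k), real_inner_smul_right, norm_smul,
        Real.norm_eq_abs, abs_of_pos (htk k), mul_pow]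
    rw [e1] at h3
    have htkpos := htk k
    nlinarith
  have hL : Tendsto (fun k => ⟪u - z, dk k⟫) atTop (𝓝 ⟪u - z, v⟫) :=
    tendsto_const_nhds.inner hdk
  have hR : Tendsto (fun k => tk k * ‖dk k‖ ^ 2 / 2) atTop (𝓝 0) := by
    have : Tendsto (fun k => tk k * ‖dk k‖ ^ 2 / 2) atTop (𝓝 (0 * ‖v‖ ^ 2 / 2)) :=
      (ht0.mul ((hdk.norm).pow 2)).div_const 2
    simpa using this
  have hfin : ⟪u - z, v⟫ ≤ 0 :=
    le_of_tendsto_of_tendsto hL hR (Eventually.of_forall key)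
  rw [real_inner_smul_right, real_inner_comm]
  exact mul_nonpos_iff.mpr (Or.inl ⟨hc, hfin⟩)

lemma hasFDeriv_normsq {H : Type*} [NormedAddCommGroup H] [InnerProductSpace ℝ H]
    (cpt p : H) :
    ∃ q' : H →L[ℝ] ℝ, HasFDerivAt (fun y => ‖y - cpt‖ ^ 2) q' p ∧
      ∀ a, q' a = ⟪(2:ℝ) • (p - cpt), a⟫ := by
  have h1 : HasFDerivAt (fun y : H => y - cpt) (ContinuousLinearMap.id ℝ H) p :=
    (hasFDerivAt_id p).sub_const cpt
  have h2 := h1.inner ℝ h1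
  refine ⟨(fderivInnerCLM ℝ (p - cpt, p - cpt)).comp
      ((ContinuousLinearMap.id ℝ H).prod (ContinuousLinearMap.id ℝ H)), ?_, ?_⟩
  · have h3 : (fun y : H => ‖y - cpt‖ ^ 2) = fun y => ⟪y - cpt, y - cpt⟫ := by
      funext y; rw [real_inner_self_eq_norm_sq]
    rw [h3]
    exact h2
  · intro a
    rw [ContinuousLinearMap.comp_apply, fderivInnerCLM_apply, real_inner_smul_left]
    simp [real_inner_comm]
    ring

lemma two_inner_eq {H : Type*} [NormedAddCommGroup H] [InnerProductSpace ℝ H]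
    (u w : H) : (2:ℝ) * ⟪u, u - w⟫ = ‖u‖ ^ 2 - ‖w‖ ^ 2 + ‖u - w‖ ^ 2 := by
  rw [inner_sub_right, real_inner_self_eq_norm_sq, norm_sub_sq_real]
  ring

lemma frechet_mem_regNormal_epi {H : Type*} [NormedAddCommGroup H]
    [InnerProductSpace ℝ H]
    (φ h : H → ℝ) (g' : H →L[ℝ] ℝ) (g : H) (x : H)
    (hd : HasFDerivAt h g' x) (hgg : ∀ a, g' a = ⟪g, a⟫) (c ρ : ℝ) (hρ : 0 < ρ)
    (hb : ∀ y, ‖y - x‖ < ρ → φ x - φ y ≤ h y - h x + c * ‖y - x‖ ^ 2) :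
    pl2 (-g) (-1) ∈ regNormal (epigraphSet φ) (pl2 x (φ x)) := by
  constructor
  · show φ x ≤ φ x
    exact le_rfl
  · intro v hv
    obtain ⟨-, dk, tk, hdk, htk, ht0, hin⟩ := hv
    set a : ℕ → H := fun k => (WithLp.equiv 2 (H × ℝ) (dk k)).1 with ha_def
    set b : ℕ → ℝ := fun k => (WithLp.equiv 2 (H × ℝ) (dk k)).2 with hb_def
    set va : H := (WithLp.equiv 2 (H × ℝ) v).1
    set vb : ℝ := (WithLp.equiv 2 (H × ℝ) v).2
    have hcle : Tendsto (fun k => (WithLp.prodContinuousLinearEquiv 2 ℝ H ℝ) (dk k))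
        atTop (𝓝 ((WithLp.prodContinuousLinearEquiv 2 ℝ H ℝ) v)) :=
      ((WithLp.prodContinuousLinearEquiv 2 ℝ H ℝ).continuous.tendsto v).comp hdk
    have haT : Tendsto a atTop (𝓝 va) := (continuous_fst.tendsto _).comp hcle
    have hbT : Tendsto b atTop (𝓝 vb) := (continuous_snd.tendsto _).comp hcle
    have hin' : ∀ k, φ (x + tk k • a k) ≤ φ x + tk k * b k := fun k => hin k
    have hnorm0 : Tendsto (fun k => ‖tk k • a k‖) atTop (𝓝 0) := by
      have h0 : Tendsto (fun k => tk k • a k) atTop (𝓝 0) := by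
        simpa using ht0.smul haT
      simpa using h0.norm
    have hev : ∀ᶠ k in atTop, -(b k) ≤
        (h (x + tk k • a k) - h x) / tk k + c * (tk k * ‖a k‖ ^ 2) := by
      have hsmall : ∀ᶠ k in atTop, ‖tk k • a k‖ < ρ :=
        hnorm0.eventually (eventually_lt_nhds hρ)
      filter_upwards [hsmall] with k hk
      have hb1 := hb (x + tk k • a k) (by rwa [add_sub_cancel_left])
      have hb2 := hin' k
      rw [add_sub_cancel_left, norm_smul, Real.norm_eq_abs, abs_of_pos (htk k),
        mul_pow] at hb1
      have htkpos := htk k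
      rw [div_add' _ _ _ (ne_of_gt htkpos), le_div_iff₀ htkpos]
      nlinarith
    have hL : Tendsto (fun k => -(b k)) atTop (𝓝 (-vb)) := hbT.neg
    have hR : Tendsto
        (fun k => (h (x + tk k • a k) - h x) / tk k + c * (tk k * ‖a k‖ ^ 2))
        atTop (𝓝 (g' va + c * (0 * ‖va‖ ^ 2))) :=
      (slope_tendsto h g' x hd tk a va htk ht0 haT).add
        (tendsto_const_nhds.mul (ht0.mul ((haT.norm).pow 2)))
    rw [zero_mul, mul_zero, add_zero] at hR
    have hfin : -vb ≤ g' va := le_of_tendsto_of_tendsto hL hR hev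
    rw [hgg va] at hfin
    have hexp : ⟪v, pl2 (-g) (-1)⟫ = ⟪va, -g⟫ + vb * (-1) := by
      rw [WithLp.prod_inner_apply]
      change ⟪va, -g⟫ + ⟪vb, (-1:ℝ)⟫ = _
      simp [mul_comm]
    rw [hexp, inner_neg_right, real_inner_comm]
    linarith

end AuxLemmas

set_option maxHeartbeats 1600000 in
/-- Every local minimizer of (P) is AM-stationary. -/
theorem stmt10 {n l : ℕ}
    (f : Eu n → ℝ) (hf : ContDiff ℝ 1 f)
    (F : Eu n → Eu l) (F' : Eu n → Eu n → Eu l)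
    (hLip : LocallyLipschitz F) (hF' : IsDirDeriv F F')
    (Γ : Set (Eu l)) (hΓne : Γ.Nonempty) (hΓcl : IsClosed Γ)
    (x : Eu n) (hfeas : F x ∈ Γ) (hmin : IsLocalMinOn f (F ⁻¹' Γ) x) :
    AMStat f F Γ x := by
  classical
  -- Lipschitz neighborhood
  obtain ⟨K, t0, ht0nhds, hK⟩ := hLip x
  obtain ⟨ε2, hε2, hball2⟩ := Metric.mem_nhds_iff.mp ht0nhds
  -- local minimality radius
  obtain ⟨ε1, hε1, hball1⟩ := Metric.mem_nhdsWithin_iff.mp hmin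
  set r : ℝ := min ε1 ε2 / 2 with hr_def
  have hr : 0 < r := by positivity
  have hrsub1 : closedBall x r ⊆ ball x ε1 := by
    intro y hy
    rw [mem_closedBall] at hy
    rw [mem_ball]
    have : r < ε1 := by
      have := min_le_left ε1 ε2
      simp only [hr_def]
      linarith
    linarith
  have hrsub2 : closedBall x r ⊆ ball x ε2 := by
    intro y hy
    rw [mem_closedBall] at hy
    rw [mem_ball]
    have : r < ε2 := by
      have := min_le_right ε1 ε2
      simp only [hr_def]
      linarith
    linarith
  have hA : ∀ y ∈ closedBall x r, F y ∈ Γ → f x ≤ f y := by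
    intro y hy hFy
    exact hball1 ⟨hrsub1 hy, hFy⟩
  have hB : LipschitzOnWith K F (closedBall x r) :=
    hK.mono (Subset.trans hrsub2 hball2)
  -- continuity facts
  have hFc : Continuous F := hLip.continuous
  have hfc : Continuous f := hf.continuous
  have hdist : Continuous fun y => infDist (F y) Γ :=
    (continuous_infDist_pt Γ).comp hFc
  -- penalized functions and their minimizers
  set g : ℕ → Eu n → ℝ := fun k y =>
    f y + ((k : ℝ) + 1) * infDist (F y) Γ ^ 2 + ‖y - x‖ ^ 2 with hg_def
  have hgc : ∀ k, Continuous (g k) := fun k =>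
    (hfc.add (continuous_const.mul (hdist.pow 2))).add
      ((continuous_id.sub continuous_const).norm.pow 2)
  have hcomp : IsCompact (closedBall x r) := isCompact_closedBall x r
  have hne : (closedBall x r).Nonempty := ⟨x, mem_closedBall_self hr.le⟩
  choose xk hxkmem hxkmin using fun k : ℕ =>
    hcomp.exists_isMinOn hne ((hgc k).continuousOn)
  obtain ⟨y0, hy0mem, hy0min⟩ := hcomp.exists_isMinOn hne hfc.continuousOn
  set m : ℝ := f y0 with hm_def
  set dk : ℕ → ℝ := fun k => infDist (F (xk k)) Γ with hdk_def
  have hdknn : ∀ k, 0 ≤ dk k := fun k => infDist_nonneg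
  have hbound : ∀ k, f (xk k) + ((k : ℝ) + 1) * dk k ^ 2 + ‖xk k - x‖ ^ 2 ≤ f x := by
    intro k
    have h1 : g k (xk k) ≤ g k x := hxkmin k (mem_closedBall_self hr.le)
    have h2 : infDist (F x) Γ = 0 := infDist_zero_of_mem hfeas
    simp only [hg_def, h2, sub_self, norm_zero] at h1
    simpa using h1
  have hmlb : ∀ k, m ≤ f (xk k) := fun k => hy0min (hxkmem k)
  -- dk → 0
  have hdk0 : Tendsto dk atTop (𝓝 0) := by
    have hub : ∀ k, dk k ≤ Real.sqrt ((f x - m) / ((k : ℝ) + 1)) := by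
      intro k
      have hk1 : (0 : ℝ) < (k : ℝ) + 1 := by positivity
      have h1 : ((k : ℝ) + 1) * dk k ^ 2 ≤ f x - m := by
        have := hbound k
        have := hmlb k
        nlinarith [sq_nonneg (‖xk k - x‖)]
      have h2 : dk k ^ 2 ≤ (f x - m) / ((k : ℝ) + 1) := by
        rw [le_div_iff₀ hk1]; linarith [h1]
      calc dk k = Real.sqrt (dk k ^ 2) := by
            rw [Real.sqrt_sq (hdknn k)]
        _ ≤ Real.sqrt ((f x - m) / ((k : ℝ) + 1)) := Real.sqrt_le_sqrt h2
    have hsq : Tendsto (fun k : ℕ => Real.sqrt ((f x - m) / ((k : ℝ) + 1)))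
        atTop (𝓝 0) := by
      have h1 : Tendsto (fun k : ℕ => (f x - m) / ((k : ℝ) + 1)) atTop (𝓝 0) := by
        apply Tendsto.div_atTop tendsto_const_nhds
        exact tendsto_atTop_add_const_right atTop 1 tendsto_natCast_atTop_atTop
      have h2 := (Real.continuous_sqrt.tendsto 0).comp h1
      simpa [Function.comp_def] using h2
    exact squeeze_zero hdknn hub hsq
  -- xk → x
  have hxk_to_x : Tendsto xk atTop (𝓝 x) := by
    by_contra hcon
    rw [Metric.tendsto_atTop] at hcon
    push_neg at hcon
    obtain ⟨ε, hε, hfreq⟩ := hcon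
    obtain ⟨ψ, hψmono, hψ⟩ := extraction_of_frequently_atTop
      (frequently_atTop.mpr fun N => by
        obtain ⟨k, hk1, hk2⟩ := hfreq N; exact ⟨k, hk1, hk2⟩)
    obtain ⟨xs, hxsmem, φ2, hφ2mono, hconv⟩ :=
      hcomp.tendsto_subseq (fun j => hxkmem (ψ j))
    set θ : ℕ → ℕ := fun j => ψ (φ2 j) with hθ_def
    have hθmono : StrictMono θ := hψmono.comp hφ2mono
    have hu : Tendsto (fun j => xk (θ j)) atTop (𝓝 xs) := hconv
    have hdθ : Tendsto (fun j => dk (θ j)) atTop (𝓝 0) :=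
      hdk0.comp hθmono.tendsto_atTop
    have hFxs : F xs ∈ Γ := by
      have h1 : Tendsto (fun j => dk (θ j)) atTop (𝓝 (infDist (F xs) Γ)) :=
        (hdist.tendsto xs).comp hu
      have h2 : infDist (F xs) Γ = 0 := tendsto_nhds_unique h1 hdθ
      exact ((hΓcl.mem_iff_infDist_zero hΓne).mpr h2)
    have hfxxs : f x ≤ f xs := hA xs hxsmem hFxs
    have hlim : f xs + ‖xs - x‖ ^ 2 ≤ f x := by
      have hev : ∀ j, f (xk (θ j)) + ‖xk (θ j) - x‖ ^ 2 ≤ f x := by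
        intro j
        have h1 := hbound (θ j)
        nlinarith [hdknn (θ j), sq_nonneg (dk (θ j)), hdknn (θ j),
          mul_nonneg (by positivity : (0:ℝ) ≤ ((θ j : ℝ) + 1)) (sq_nonneg (dk (θ j)))]
      have hT : Tendsto (fun j => f (xk (θ j)) + ‖xk (θ j) - x‖ ^ 2) atTop
          (𝓝 (f xs + ‖xs - x‖ ^ 2)) := by
        exact ((hfc.tendsto xs).comp hu).add
          ((((continuous_id.sub continuous_const).norm.pow 2).tendsto xs).comp hu)
      exact le_of_tendsto hT (Eventually.of_forall hev)
    have hxs_eq : xs = x := by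
      have h1 : ‖xs - x‖ ^ 2 ≤ 0 := by linarith
      have h2 : ‖xs - x‖ = 0 := by nlinarith [norm_nonneg (xs - x)]
      exact sub_eq_zero.mp (norm_eq_zero.mp h2)
    have hεlim : ε ≤ dist xs x := by
      have hT : Tendsto (fun j => dist (xk (θ j)) x) atTop (𝓝 (dist xs x)) :=
        ((continuous_id.dist continuous_const).tendsto xs).comp hu
      exact ge_of_tendsto hT (Eventually.of_forall (fun j => hψ (φ2 j)))
    rw [hxs_eq, dist_self] at hεlim
    linarith
  -- eventually inside the ball
  obtain ⟨N, hN⟩ := Metric.tendsto_atTop.mp hxk_to_x (r / 2) (by positivity)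
  -- projections
  choose z hzΓ hzdist using fun k : ℕ => hΓcl.exists_infDist_eq_dist hΓne (F (xk k))
  -- final sequences
  refine ⟨fun k => xk (k + N), fun k => (2 * (((k + N : ℕ) : ℝ) + 1)) • (F (xk (k + N)) - z (k + N)),
    fun k => F (xk (k + N)) - z (k + N), fun k => (-2 : ℝ) • (xk (k + N) - x),
    ?_, ?_, ?_, ?_, ?_⟩
  · -- main subdifferential membership
    intro k
    set X : Eu n := xk (k + N) with hX_def
    set κ : ℝ := ((k + N : ℕ) : ℝ) + 1 with hκ_def
    have hκpos : 0 < κ := by positivity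
    set zz : Eu l := z (k + N) with hzz_def
    set lam : Eu l := (2 * κ) • (F X - zz) with hlam_def
    set φ : Eu n → ℝ := fun y => ⟪lam, F y⟫ with hφ_def
    set gv : Eu n := gradient f X + (2 : ℝ) • (X - x) with hgv_def
    have hXmem : X ∈ closedBall x r := hxkmem (k + N)
    have hXclose : dist X x < r / 2 := hN (k + N) (Nat.le_add_left N k)
    set ρ : ℝ := r - dist X x with hρ_def
    have hρpos : 0 < ρ := by
      have : dist X x < r := lt_of_lt_of_le hXclose (by linarith)
      simp only [hρ_def]; linarith
    -- derivative of h := f + ‖· - x‖²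
    have hfd : HasFDerivAt f (InnerProductSpace.toDual ℝ (Eu n) (gradient f X)) X :=
      hasGradientAt_iff_hasFDerivAt.mp
        ((hf.differentiable one_ne_zero).differentiableAt.hasGradientAt)
    obtain ⟨q', hq'd, hq'v⟩ := hasFDeriv_normsq x X
    have hd : HasFDerivAt (fun y => f y + ‖y - x‖ ^ 2)
        (InnerProductSpace.toDual ℝ (Eu n) (gradient f X) + q') X := hfd.add hq'd
    have hgg : ∀ a, (InnerProductSpace.toDual ℝ (Eu n) (gradient f X) + q') a
        = ⟪gv, a⟫ := by
      intro a
      rw [ContinuousLinearMap.add_apply, hq'v a, hgv_def, inner_add_left,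
        InnerProductSpace.toDual_apply_apply]
    -- the quadratic bound
    have hb : ∀ y, ‖y - X‖ < ρ →
        φ X - φ y ≤ (f y + ‖y - x‖ ^ 2) - (f X + ‖X - x‖ ^ 2)
          + (κ * (K : ℝ) ^ 2) * ‖y - X‖ ^ 2 := by
      intro y hy
      have hymem : y ∈ closedBall x r := by
        rw [mem_closedBall]
        have h1 : dist y x ≤ dist y X + dist X x := dist_triangle y X x
        have h2 : dist y X < ρ := by rwa [dist_eq_norm]
        simp only [hρ_def] at h2
        linarith
      set u : Eu l := F X - zz with hu_def
      set w : Eu l := F y - zz with hw_def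
      have huw : F X - F y = u - w := by simp only [hu_def, hw_def]; abel
      -- identity
      have hid : φ X - φ y = κ * (‖u‖ ^ 2 - ‖w‖ ^ 2) + κ * ‖u - w‖ ^ 2 := by
        have h0 : φ X - φ y = ⟪lam, u - w⟫ := by
          simp only [hφ_def]
          rw [← inner_sub_right, huw]
        have h1 := two_inner_eq u w
        rw [h0, hlam_def, real_inner_smul_left]
        linear_combination κ * h1
      -- minimality
      have hminin : κ * ‖u‖ ^ 2 - κ * ‖w‖ ^ 2 ≤
          (f y + ‖y - x‖ ^ 2) - (f X + ‖X - x‖ ^ 2) := by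
        have h1 : g (k + N) X ≤ g (k + N) y := hxkmin (k + N) hymem
        have h2 : infDist (F X) Γ = ‖u‖ := by
          rw [hu_def, ← dist_eq_norm]; exact hzdist (k + N)
        have h3 : infDist (F y) Γ ≤ ‖w‖ := by
          rw [hw_def, ← dist_eq_norm]; exact infDist_le_dist_of_mem (hzΓ (k + N))
        have h4 : infDist (F y) Γ ^ 2 ≤ ‖w‖ ^ 2 := by
          nlinarith [infDist_nonneg (x := F y) (s := Γ)]
        simp only [hg_def, h2] at h1
        have hκ' : ((k + N : ℕ) : ℝ) + 1 = κ := rfl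
        rw [hκ'] at h1
        linarith [mul_le_mul_of_nonneg_left h4 hκpos.le]
      -- Lipschitz bound
      have hlipb : ‖u - w‖ ^ 2 ≤ (K : ℝ) ^ 2 * ‖y - X‖ ^ 2 := by
        have h1 : dist (F X) (F y) ≤ (K : ℝ) * dist X y :=
          hB.dist_le_mul X hXmem y hymem
        rw [dist_eq_norm, dist_eq_norm] at h1
        have h2 : ‖u - w‖ = ‖F X - F y‖ := by rw [huw]
        have h3 : ‖X - y‖ = ‖y - X‖ := norm_sub_rev X y
        have h5 : ‖u - w‖ ≤ (K : ℝ) * ‖y - X‖ := by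
          rw [h2, ← h3]; exact h1
        calc ‖u - w‖ ^ 2 ≤ ((K : ℝ) * ‖y - X‖) ^ 2 :=
              pow_le_pow_left₀ (norm_nonneg _) h5 2
          _ = (K : ℝ) ^ 2 * ‖y - X‖ ^ 2 := by ring
      rw [hid]
      nlinarith [mul_le_mul_of_nonneg_left hlipb hκpos.le]
    have hfr := frechet_mem_regNormal_epi φ (fun y => f y + ‖y - x‖ ^ 2)
      (InnerProductSpace.toDual ℝ (Eu n) (gradient f X) + q') gv X hd hgg
      (κ * (K : ℝ) ^ 2) ρ hρpos hb
    have heq : (-2 : ℝ) • (X - x) - gradient f X = -gv := by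
      simp only [hgv_def]
      module
    show pl2 ((-2 : ℝ) • (X - x) - gradient f X) (-1)
      ∈ limNormal (epigraphSet φ) (pl2 X (φ X))
    rw [heq]
    exact regNormal_subset_limNormal _ _ hfr
  · -- normal cone condition
    intro k
    have he : F (xk (k + N)) - (F (xk (k + N)) - z (k + N)) = z (k + N) := by abel
    rw [he]
    refine regNormal_subset_limNormal _ _ (proj_mem_regNormal Γ (F (xk (k + N)))
      (z (k + N)) (hzΓ (k + N)) ?_ _ (by positivity))
    intro w hw
    rw [← hzdist (k + N)]
    exact infDist_le_dist_of_mem hw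
  · exact hxk_to_x.comp (tendsto_add_atTop_nat N)
  · rw [tendsto_zero_iff_norm_tendsto_zero]
    have h1 : Tendsto (fun k => dk (k + N)) atTop (𝓝 0) :=
      hdk0.comp (tendsto_add_atTop_nat N)
    refine h1.congr (fun k => ?_)
    rw [hdk_def]
    simp only
    rw [hzdist (k + N), dist_eq_norm]
  · have h1 : Tendsto (fun k => xk (k + N) - x) atTop (𝓝 0) := by
      have := (hxk_to_x.comp (tendsto_add_atTop_nat N)).sub
        (tendsto_const_nhds (x := x))
      simpa using this
    have := h1.const_smul (-2 : ℝ)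
    simpa using this

end
end

section
/- Let x̄ be feasible for (P) and let {(x^k, λ^k, δ^k, ε^k)} be an AM-stationary sequence w.r.t. x̄. If the sequence {λ^k} is bounded, then x̄ is M-stationary. -/
set_option linter.unusedSectionVars false
set_option linter.unusedVariables false
set_option maxHeartbeats 1000000


open Filter Topology Metric Set
open scoped RealInnerProductSpace Pointwise

noncomputable section

-- ==================== auxiliary lemmas ====================

section AuxPl2

variable {E : Type*} [NormedAddCommGroup E] [InnerProductSpace ℝ E]

lemma pl2_inner (a c : E) (b d : ℝ) : ⟪pl2 a b, pl2 c d⟫ = ⟪a, c⟫ + b * d := by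
  rw [WithLp.prod_inner_apply]; norm_num [RCLike.inner_apply, pl2]; ring

lemma pl2_norm_sq (a : E) (b : ℝ) : ‖pl2 a b‖ ^ 2 = ‖a‖ ^ 2 + b ^ 2 := by
  rw [WithLp.prod_norm_sq_eq_of_L2]; norm_num [pl2]

lemma pl2_sub (a c : E) (b d : ℝ) : pl2 a b - pl2 c d = pl2 (a - c) (b - d) := rfl

lemma pl2_eta (p : WithLp 2 (E × ℝ)) : pl2 p.ofLp.1 p.ofLp.2 = p := rfl

lemma pl2_fst_norm_le (a : E) (b : ℝ) : ‖a‖ ≤ ‖pl2 a b‖ := by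
  have h := pl2_norm_sq a b
  nlinarith [norm_nonneg (pl2 a b), norm_nonneg a, sq_nonneg b]

lemma pl2_snd_abs_le (a : E) (b : ℝ) : |b| ≤ ‖pl2 a b‖ := by
  have h := pl2_norm_sq a b
  nlinarith [norm_nonneg (pl2 a b), abs_nonneg b, sq_nonneg ‖a‖, sq_abs b]

lemma pl2_norm_le (a : E) (b : ℝ) : ‖pl2 a b‖ ≤ ‖a‖ + |b| := by
  have h := pl2_norm_sq a b
  nlinarith [norm_nonneg (pl2 a b), norm_nonneg a, abs_nonneg b, sq_abs b]

lemma pl2_norm_zero_fst (t : ℝ) : ‖pl2 (0 : E) t‖ = |t| := by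
  rw [← Real.sqrt_sq (norm_nonneg (pl2 (0 : E) t)), ← Real.sqrt_sq (abs_nonneg t)]
  congr 1
  rw [pl2_norm_sq, sq_abs]
  simp

lemma pl2_norm_shift (a : E) (s t : ℝ) : ‖pl2 a t‖ ≤ ‖pl2 a s‖ + |t - s| := by
  have h0 : pl2 a t = pl2 a s + pl2 0 (t - s) := by
    have h1 : pl2 a s + pl2 (0 : E) (t - s) = pl2 (a + 0) (s + (t - s)) := rfl
    rw [h1, add_zero]
    congr 1
    ring
  rw [h0]
  exact (norm_add_le _ _).trans (by rw [pl2_norm_zero_fst])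

lemma tendsto_pl2 {u : ℕ → E} {v : ℕ → ℝ} {a : E} {b : ℝ}
    (hu : Tendsto u atTop (𝓝 a)) (hv : Tendsto v atTop (𝓝 b)) :
    Tendsto (fun k => pl2 (u k) (v k)) atTop (𝓝 (pl2 a b)) := by
  rw [tendsto_iff_dist_tendsto_zero]
  refine squeeze_zero (g := fun k => ‖u k - a‖ + |v k - b|) (fun k => dist_nonneg)
    (fun k => ?_) ?_
  · rw [dist_eq_norm, pl2_sub]
    exact pl2_norm_le _ _
  · have h1 := tendsto_iff_dist_tendsto_zero.1 hu
    have h2 := tendsto_iff_dist_tendsto_zero.1 hv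
    simpa [dist_eq_norm, Real.dist_eq] using h1.add h2

end AuxPl2

section AuxCones

variable {E : Type*} [NormedAddCommGroup E] [InnerProductSpace ℝ E]

lemma norm_inv_smul {x : E} (hx : x ≠ 0) : ‖‖x‖⁻¹ • x‖ = 1 := by
  rw [norm_smul, norm_inv, norm_norm, inv_mul_cancel₀ (norm_ne_zero_iff.2 hx)]

lemma polarCone_smul {C : Set E} {η : E} {c : ℝ} (hc : 0 ≤ c) (h : η ∈ polarCone C) :
    c • η ∈ polarCone C := by
  intro x hx
  have h1 := h x hx
  rw [real_inner_smul_right]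
  nlinarith

lemma tendsto_of_dist_le {X : Type*} [PseudoMetricSpace X] {u v : ℕ → X} {a : X}
    (h : ∀ k : ℕ, dist (u k) (v k) ≤ 1 / (k + 1)) (hv : Tendsto v atTop (𝓝 a)) :
    Tendsto u atTop (𝓝 a) := by
  rw [tendsto_iff_dist_tendsto_zero]
  refine squeeze_zero (g := fun k => 1 / (k + 1) + dist (v k) a) (fun k => dist_nonneg)
    (fun k => ?_) ?_
  · exact (dist_triangle (u k) (v k) a).trans (add_le_add_left (h k) _)
  · simpa using tendsto_one_div_add_atTop_nhds_zero_nat.add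
      (tendsto_iff_dist_tendsto_zero.1 hv)

lemma eps_normal [FiniteDimensional ℝ E] {Ω : Set E} {z η : E} (hz : z ∈ Ω)
    (hη : η ∈ polarCone (tanCone Ω z)) {ε : ℝ} (hε : 0 < ε) :
    ∃ ρ > 0, ∀ w ∈ Ω, dist w z ≤ ρ → ⟪η, w - z⟫ ≤ ε * ‖w - z‖ := by
  by_contra hcon
  push_neg at hcon
  have hsel : ∀ m : ℕ, ∃ w, w ∈ Ω ∧ dist w z ≤ 1 / (m + 1) ∧ ε * ‖w - z‖ < ⟪η, w - z⟫ := by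
    intro m
    obtain ⟨w, hw1, hw2, hw3⟩ := hcon (1 / (m + 1)) (by positivity)
    exact ⟨w, hw1, hw2, hw3⟩
  choose w hwΩ hwd hwlt using hsel
  have hwne : ∀ m, w m - z ≠ 0 := by
    intro m h0
    have h1 := hwlt m
    rw [h0] at h1
    simp at h1
  have hdsphere : ∀ m, ‖w m - z‖⁻¹ • (w m - z) ∈ sphere (0 : E) 1 := by
    intro m
    exact mem_sphere_zero_iff_norm.2 (norm_inv_smul (hwne m))
  obtain ⟨dl, hdlmem, σ, hσ, hconv⟩ := (isCompact_sphere (0 : E) 1).tendsto_subseq hdsphere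
  have htk0 : Tendsto (fun i => ‖w (σ i) - z‖) atTop (𝓝 0) := by
    refine squeeze_zero (fun i => norm_nonneg _) (fun i => ?_)
      tendsto_one_div_add_atTop_nhds_zero_nat
    calc ‖w (σ i) - z‖ = dist (w (σ i)) z := (dist_eq_norm _ _).symm
      _ ≤ 1 / (σ i + 1) := hwd _
      _ ≤ 1 / (i + 1) := by
          apply one_div_le_one_div_of_le (by positivity)
          have hle : i ≤ σ i := hσ.le_apply
          have : (i : ℝ) ≤ (σ i : ℝ) := Nat.cast_le.2 hle
          linarith
  have hdl_tan : dl ∈ tanCone Ω z := by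
    refine ⟨hz, fun i => ‖w (σ i) - z‖⁻¹ • (w (σ i) - z), fun i => ‖w (σ i) - z‖,
      hconv, fun i => norm_pos_iff.2 (hwne _), htk0, fun i => ?_⟩
    have h2 : z + ‖w (σ i) - z‖ • (‖w (σ i) - z‖⁻¹ • (w (σ i) - z)) = w (σ i) := by
      rw [smul_smul, mul_inv_cancel₀ (norm_ne_zero_iff.2 (hwne _)), one_smul]
      abel
    rw [h2]
    exact hwΩ _
  have h1 : ∀ i, ε ≤ ⟪η, ‖w (σ i) - z‖⁻¹ • (w (σ i) - z)⟫ := by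
    intro i
    have hv : 0 < ‖w (σ i) - z‖ := norm_pos_iff.2 (hwne _)
    have h3 := hwlt (σ i)
    rw [real_inner_smul_right, inv_mul_eq_div, le_div_iff₀ hv]
    linarith
  have h2 : Tendsto (fun i => ⟪η, ‖w (σ i) - z‖⁻¹ • (w (σ i) - z)⟫) atTop (𝓝 ⟪η, dl⟫) :=
    Tendsto.inner tendsto_const_nhds hconv
  have h3 : ε ≤ ⟪η, dl⟫ := ge_of_tendsto' h2 h1
  have h4 := hη dl hdl_tan
  rw [real_inner_comm] at h4
  linarith

lemma proj_regNormal [FiniteDimensional ℝ E] {Ω : Set E} (hcl : IsClosed Ω) (hne : Ω.Nonempty)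
    (z' : E) : ∃ w ∈ Ω, dist z' w = infDist z' Ω ∧ z' - w ∈ polarCone (tanCone Ω w) := by
  obtain ⟨w, hwΩ, hwd⟩ := hcl.exists_infDist_eq_dist hne z'
  refine ⟨w, hwΩ, hwd.symm, fun dd hdd => ?_⟩
  obtain ⟨-, dk, tk, hdk, htkpos, htk0, hmemk⟩ := hdd
  have key : ∀ i, ⟪z' - w, dk i⟫ ≤ tk i * ‖dk i‖ ^ 2 / 2 := by
    intro i
    have h1 : dist z' w ≤ dist z' (w + tk i • dk i) := by
      rw [← hwd]
      exact infDist_le_dist_of_mem (hmemk i)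
    rw [dist_eq_norm, dist_eq_norm] at h1
    have h2 : z' - (w + tk i • dk i) = (z' - w) - tk i • dk i := by abel
    rw [h2] at h1
    have h3 : ‖z' - w‖ ^ 2 ≤ ‖(z' - w) - tk i • dk i‖ ^ 2 := by
      exact pow_le_pow_left₀ (norm_nonneg _) h1 2
    rw [norm_sub_sq_real (z' - w) (tk i • dk i), real_inner_smul_right, norm_smul,
      Real.norm_eq_abs, abs_of_pos (htkpos i)] at h3
    nlinarith [htkpos i]
  have hlim1 : Tendsto (fun i => ⟪z' - w, dk i⟫) atTop (𝓝 ⟪z' - w, dd⟫) :=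
    Tendsto.inner tendsto_const_nhds hdk
  have hlim2 : Tendsto (fun i => tk i * ‖dk i‖ ^ 2 / 2) atTop (𝓝 0) := by
    have h := (htk0.mul ((hdk.norm).pow 2)).div_const 2
    simpa using h
  have := le_of_tendsto_of_tendsto' hlim1 hlim2 key
  rwa [real_inner_comm] at this

lemma limNormal_osc [FiniteDimensional ℝ E] {Ω : Set E} (hcl : IsClosed Ω)
    {zk ηk : ℕ → E} {z η : E} (hz : Tendsto zk atTop (𝓝 z)) (hη : Tendsto ηk atTop (𝓝 η))
    (hmem : ∀ k, ηk k ∈ limNormal Ω (zk k)) : η ∈ limNormal Ω z := by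
  have hzΩ : z ∈ Ω := hcl.mem_of_tendsto hz (Eventually.of_forall fun k => (hmem k).1)
  have hsel : ∀ k : ℕ, ∃ pq : E × E, pq.2 ∈ regNormal Ω pq.1 ∧
      dist pq.1 (zk k) ≤ 1 / (k + 1) ∧ dist pq.2 (ηk k) ≤ 1 / (k + 1) := by
    intro k
    obtain ⟨-, xs, ηs, hxs, hηs, hregs⟩ := hmem k
    obtain ⟨j1, hj1⟩ := Metric.tendsto_atTop.1 hxs (1 / (k + 1)) (by positivity)
    obtain ⟨j2, hj2⟩ := Metric.tendsto_atTop.1 hηs (1 / (k + 1)) (by positivity)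
    exact ⟨(xs (max j1 j2), ηs (max j1 j2)), hregs _, (hj1 _ (le_max_left _ _)).le,
      (hj2 _ (le_max_right _ _)).le⟩
  choose pq hreg hd1 hd2 using hsel
  exact ⟨hzΩ, fun k => (pq k).1, fun k => (pq k).2, tendsto_of_dist_le hd1 hz,
    tendsto_of_dist_le hd2 hη, hreg⟩

lemma epigraph_closed {φ : E → ℝ} (hφ : Continuous φ) : IsClosed (epigraphSet φ) := by
  have h1 : Continuous fun p : WithLp 2 (E × ℝ) => p.ofLp.1 :=
    continuous_fst.comp (WithLp.prodContinuousLinearEquiv 2 ℝ E ℝ).continuous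
  have h2 : Continuous fun p : WithLp 2 (E × ℝ) => p.ofLp.2 :=
    continuous_snd.comp (WithLp.prodContinuousLinearEquiv 2 ℝ E ℝ).continuous
  exact isClosed_le (hφ.comp h1) h2

end AuxCones

section Arith

lemma arith_iI {i I e N : ℝ} (hi0 : 0 ≤ i) (hi2 : i ≤ 2) (hI : I ≤ e * N)
    (he : 0 ≤ e) (hN : 0 ≤ N) : i * I ≤ 2 * (e * N) := by
  rcases le_or_gt I 0 with h | h
  · nlinarith
  · nlinarith

lemma arith_N {N ρ e m : ℝ} (hN : 0 ≤ N) (hρ : 0 < ρ) (he : 0 ≤ e)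
    (h1 : N ^ 2 ≤ 2 * (ρ * m)) (h2 : m ≤ 2 * (e * N)) : N ≤ 4 * ρ * e := by
  rcases eq_or_lt_of_le hN with h0 | h0
  · nlinarith
  · nlinarith

lemma arith_coef1 {CZ Kr CF e ρ dw : ℝ} (he0 : 0 < e) (he1 : e ≤ 1 / 2) (hK : 0 ≤ Kr)
    (hCZ : 2 ≤ CZ) (hCF : 1 ≤ CF) (hρ0 : 0 < ρ) (hρe : ρ ≤ e / 4)
    (hdw : dw ≤ 4 * ρ * ((2 + CZ * Kr) * e) + e * CF + e) :
    dw ≤ (4 * (CZ + 1) * (CZ * Kr + 2) + CF + 2) * e := by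
  nlinarith [mul_nonneg (mul_nonneg (by linarith : (0:ℝ) ≤ CZ) hK) he0.le, sq_nonneg e,
    mul_le_mul_of_nonneg_right hρe (mul_nonneg (by nlinarith : (0:ℝ) ≤ 2 + CZ * Kr) he0.le),
    mul_le_mul_of_nonneg_right he1 (mul_nonneg (by nlinarith : (0:ℝ) ≤ 2 + CZ * Kr) he0.le),
    mul_nonneg (mul_nonneg (by linarith : (0:ℝ) ≤ CZ) hK) he0.le]

lemma arith_coef2 {CZ Kr CF e dw : ℝ} (he0 : 0 < e) (hK : 0 ≤ Kr)
    (hCZ : 2 ≤ CZ) (hCF : 1 ≤ CF)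
    (hdw : dw ≤ 4 * CZ * ((2 + CZ * Kr) * e) + e) :
    dw ≤ (4 * (CZ + 1) * (CZ * Kr + 2) + CF + 2) * e := by
  nlinarith [mul_nonneg (mul_nonneg (by linarith : (0:ℝ) ≤ CZ) hK) he0.le,
    mul_nonneg hK he0.le]

end Arith

section ScalClosed

variable {n l : ℕ}

lemma scal_closed {F : Eu n → Eu l} (hLip : LocallyLipschitz F)
    {xk : ℕ → Eu n} {lamk : ℕ → Eu l} {ξk : ℕ → Eu n} {x ξ : Eu n} {lam : Eu l}
    (hx : Tendsto xk atTop (𝓝 x)) (hlam : Tendsto lamk atTop (𝓝 lam))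
    (hξ : Tendsto ξk atTop (𝓝 ξ)) (hmem : ∀ k, ξk k ∈ scalSubdiff F (lamk k) (xk k)) :
    ξ ∈ scalSubdiff F lam x := by
  classical
  have hFc : Continuous F := hLip.continuous
  -- Lipschitz data near x
  obtain ⟨K, t, htx, hKt⟩ := hLip x
  obtain ⟨r, hr0, hrball⟩ := Metric.mem_nhds_iff.1 htx
  have hK : LipschitzOnWith K F (ball x r) := hKt.mono hrball
  have hKr0 : (0 : ℝ) ≤ (K : ℝ) := K.coe_nonneg
  -- select approximating regular normals
  have hsel : ∀ k : ℕ, ∃ zζ : (WithLp 2 (Eu n × ℝ)) × (WithLp 2 (Eu n × ℝ)),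
      zζ.2 ∈ regNormal (epigraphSet fun y => ⟪lamk k, F y⟫) zζ.1 ∧
      dist zζ.1 (pl2 (xk k) ⟪lamk k, F (xk k)⟫) ≤ 1 / (k + 1) ∧
      dist zζ.2 (pl2 (ξk k) (-1)) ≤ 1 / (k + 1) := by
    intro k
    obtain ⟨-, xs, ηs, hxs, hηs, hregs⟩ := hmem k
    obtain ⟨j1, hj1⟩ := Metric.tendsto_atTop.1 hxs (1 / (k + 1)) (by positivity)
    obtain ⟨j2, hj2⟩ := Metric.tendsto_atTop.1 hηs (1 / (k + 1)) (by positivity)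
    exact ⟨(xs (max j1 j2), ηs (max j1 j2)), hregs _, (hj1 _ (le_max_left _ _)).le,
      (hj2 _ (le_max_right _ _)).le⟩
  choose zζ hreg hzd hζd using hsel
  have hζ2lim : Tendsto (fun k => (zζ k).2) atTop (𝓝 (pl2 ξ (-1))) :=
    tendsto_of_dist_le hζd (tendsto_pl2 hξ tendsto_const_nhds)
  have hz1lim : Tendsto (fun k => (zζ k).1) atTop (𝓝 (pl2 x ⟪lam, F x⟫)) :=
    tendsto_of_dist_le hzd (tendsto_pl2 hx (hlam.inner ((hFc.tendsto x).comp hx)))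
  have hZnorm : (1 : ℝ) ≤ ‖pl2 ξ (-1)‖ := by
    have h := pl2_snd_abs_le ξ (-1)
    simpa using h
  set CZ : ℝ := ‖pl2 ξ (-1)‖ + 1 with hCZdef
  have hCZ1 : (2 : ℝ) ≤ CZ := by rw [hCZdef]; linarith
  have hCZ0 : (0 : ℝ) < CZ := by linarith
  set CF : ℝ := ‖F x‖ + (K : ℝ) * r + 1 with hCFdef
  have hCF1 : (1 : ℝ) ≤ CF := by
    rw [hCFdef]
    linarith [norm_nonneg (F x), mul_nonneg hKr0 hr0.le]
  set D : ℝ := 4 * (CZ + 1) * (CZ * (K : ℝ) + 2) + CF + 2 with hDdef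
  have hCZK0 : (0 : ℝ) ≤ CZ * (K : ℝ) := mul_nonneg hCZ0.le hKr0
  have hD0 : (0 : ℝ) < D := by
    rw [hDdef]
    have h1 : (0:ℝ) ≤ 4 * (CZ + 1) * (CZ * (K : ℝ) + 2) :=
      mul_nonneg (by linarith) (by linarith)
    linarith
  -- the key approximation claim
  have key : ∀ ε : ℝ, 0 < ε → ∃ w η : WithLp 2 (Eu n × ℝ),
      η ∈ regNormal (epigraphSet fun y => ⟪lam, F y⟫) w ∧
      dist w (pl2 x ⟪lam, F x⟫) ≤ ε ∧ dist η (pl2 ξ (-1)) ≤ ε := by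
    intro ε hε
    set ε' : ℝ := min (min (1 / 2) (min (r / 4) (1 / ((K : ℝ) + 1)))) (ε / D) with hε'def
    have hε'0 : 0 < ε' := by
      rw [hε'def]
      refine lt_min (lt_min one_half_pos (lt_min (by positivity) (by positivity))) (by positivity)
    have hε'half : ε' ≤ 1 / 2 := le_trans (min_le_left _ _) (min_le_left _ _)
    have hε'r : ε' ≤ r / 4 :=
      le_trans (min_le_left _ _) (le_trans (min_le_right _ _) (min_le_left _ _))
    have hε'K : (K : ℝ) * ε' ≤ 1 := by
      have h1 : ε' ≤ 1 / ((K : ℝ) + 1) :=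
        le_trans (min_le_left _ _) (le_trans (min_le_right _ _) (min_le_right _ _))
      have h2 : (K : ℝ) * ε' ≤ (K : ℝ) * (1 / ((K : ℝ) + 1)) :=
        mul_le_mul_of_nonneg_left h1 hKr0
      have h3 : (K : ℝ) * (1 / ((K : ℝ) + 1)) ≤ 1 := by
        rw [mul_one_div, div_le_one (by positivity)]
        linarith
      linarith
    have hε'D : ε' ≤ ε / D := min_le_right _ _
    -- choose a good index k
    have hEv1 : ∀ᶠ k in atTop, dist (lamk k) lam ≤ ε' := by
      obtain ⟨N, hN⟩ := Metric.tendsto_atTop.1 hlam ε' hε'0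
      exact eventually_atTop.2 ⟨N, fun k hk => (hN k hk).le⟩
    have hEv2 : ∀ᶠ k in atTop, dist ((zζ k).1) (pl2 x ⟪lam, F x⟫) ≤ ε' := by
      obtain ⟨N, hN⟩ := Metric.tendsto_atTop.1 hz1lim ε' hε'0
      exact eventually_atTop.2 ⟨N, fun k hk => (hN k hk).le⟩
    have hEv3 : ∀ᶠ k in atTop, dist ((zζ k).2) (pl2 ξ (-1)) ≤ ε' := by
      obtain ⟨N, hN⟩ := Metric.tendsto_atTop.1 hζ2lim ε' hε'0
      exact eventually_atTop.2 ⟨N, fun k hk => (hN k hk).le⟩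
    obtain ⟨k, ⟨hk1, hk2⟩, hk3⟩ := ((hEv1.and hEv2).and hEv3).exists
    obtain ⟨hzkE, hζpol⟩ := hreg k
    set yk : Eu n := (zζ k).1.ofLp.1 with hykdef
    set ak : ℝ := (zζ k).1.ofLp.2 with hakdef
    set ζ : WithLp 2 (Eu n × ℝ) := (zζ k).2 with hζdef
    set ee : Eu n → ℝ := fun y => ⟪lam - lamk k, F y⟫ with heedef
    have hεl : ‖lam - lamk k‖ ≤ ε' := by
      rw [← dist_eq_norm, dist_comm]; exact hk1
    have hyk : ‖yk - x‖ ≤ ε' := by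
      refine le_trans ?_ hk2
      rw [dist_eq_norm]
      have hsub : (zζ k).1 - pl2 x ⟪lam, F x⟫ = pl2 (yk - x) (ak - ⟪lam, F x⟫) := rfl
      rw [hsub]
      exact pl2_fst_norm_le _ _
    have hykball : yk ∈ ball x r := by
      rw [mem_ball_iff_norm]
      have : ε' < r := by linarith
      linarith
    have hζlb : (1 : ℝ) / 2 ≤ ‖ζ‖ := by
      have h1 : |‖ζ‖ - ‖pl2 ξ (-1)‖| ≤ ‖ζ - pl2 ξ (-1)‖ := abs_norm_sub_norm_le _ _
      rw [← dist_eq_norm] at h1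
      have h2 := abs_le.1 h1
      linarith [h2.1, hk3]
    have hζub : ‖ζ‖ ≤ CZ := by
      have h1 : |‖ζ‖ - ‖pl2 ξ (-1)‖| ≤ ‖ζ - pl2 ξ (-1)‖ := abs_norm_sub_norm_le _ _
      rw [← dist_eq_norm] at h1
      have h2 := abs_le.1 h1
      rw [hCZdef]
      linarith [h2.2, hk3]
    have hζne : ζ ≠ 0 := by
      intro h0
      rw [h0, norm_zero] at hζlb
      linarith
    have hφsplit : ∀ y, ⟪lam, F y⟫ = ⟪lamk k, F y⟫ + ee y := by
      intro y
      rw [heedef]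
      simp [inner_sub_left]
    have hediff : ∀ y y', y ∈ ball x r → y' ∈ ball x r →
        |ee y - ee y'| ≤ ((K : ℝ) * ε') * ‖y - y'‖ := by
      intro y y' hy hy'
      have h1 : ee y - ee y' = ⟪lam - lamk k, F y - F y'⟫ := by
        rw [heedef]; simp [inner_sub_right]
      rw [h1]
      have h2 := abs_real_inner_le_norm (lam - lamk k) (F y - F y')
      have h3 : ‖F y - F y'‖ ≤ (K : ℝ) * ‖y - y'‖ := by
        have h4 := hK.dist_le_mul y hy y' hy'
        rwa [dist_eq_norm, dist_eq_norm] at h4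
      calc |⟪lam - lamk k, F y - F y'⟫| ≤ ‖lam - lamk k‖ * ‖F y - F y'‖ := h2
        _ ≤ ε' * ((K : ℝ) * ‖y - y'‖) :=
            mul_le_mul hεl h3 (norm_nonneg _) hε'0.le
        _ = ((K : ℝ) * ε') * ‖y - y'‖ := by ring
    have heyk : |ee yk| ≤ ε' * CF := by
      have h1 : |ee yk| ≤ ‖lam - lamk k‖ * ‖F yk‖ := abs_real_inner_le_norm _ _
      have h2 : ‖F yk‖ ≤ CF := by
        have h3 : dist (F yk) (F x) ≤ (K : ℝ) * dist yk x :=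
          hK.dist_le_mul yk hykball x (mem_ball_self hr0)
        have h4 : ‖F yk‖ ≤ ‖F x‖ + ‖F yk - F x‖ := by
          have h5 : F yk = F x + (F yk - F x) := by abel
          calc ‖F yk‖ = ‖F x + (F yk - F x)‖ := by rw [← h5]
            _ ≤ ‖F x‖ + ‖F yk - F x‖ := norm_add_le _ _
        have h6 : ‖yk - x‖ ≤ r := by linarith
        rw [hCFdef]
        rw [dist_eq_norm, dist_eq_norm] at h3
        have h7 := mul_le_mul_of_nonneg_left h6 hKr0
        linarith
      calc |ee yk| ≤ ‖lam - lamk k‖ * ‖F yk‖ := h1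
        _ ≤ ε' * CF := mul_le_mul hεl h2 (norm_nonneg _) hε'0.le
    obtain ⟨ρ₀, hρ₀, hρprop⟩ := eps_normal hzkE hζpol hε'0
    set ρ' : ℝ := min ρ₀ (min ε' r) / 4 with hρ'def
    have hρ'0 : 0 < ρ' := by
      rw [hρ'def]
      have := lt_min hρ₀ (lt_min hε'0 hr0)
      linarith
    have hρ'ρ₀ : ρ' ≤ ρ₀ / 4 := by
      rw [hρ'def]
      have := min_le_left ρ₀ (min ε' r)
      linarith
    have hρ'ε' : ρ' ≤ ε' / 4 := by
      rw [hρ'def]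
      have h1 := min_le_right ρ₀ (min ε' r)
      have h2 := min_le_left ε' r
      linarith
    have hρ'r : ρ' ≤ r / 4 := by
      rw [hρ'def]
      have h1 := min_le_right ρ₀ (min ε' r)
      have h2 := min_le_right ε' r
      linarith
    set zt : WithLp 2 (Eu n × ℝ) := pl2 yk (ak + ee yk) with hztdef
    have hzkineq : ⟪lamk k, F yk⟫ ≤ ak := hzkE
    have hztE : zt ∈ epigraphSet (fun y => ⟪lam, F y⟫) := by
      show ⟪lam, F yk⟫ ≤ ak + ee yk
      rw [hφsplit yk]
      linarith
    have hepsφ : ∀ w ∈ epigraphSet (fun y => ⟪lam, F y⟫), dist w zt ≤ 2 * ρ' →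
        ⟪ζ, w - zt⟫ ≤ ((2 + CZ * (K : ℝ)) * ε') * ‖w - zt‖ := by
      intro w hwE hwd
      have hwineq : ⟪lam, F w.ofLp.1⟫ ≤ w.ofLp.2 := hwE
      have hwzt1 : w - zt = pl2 (w.ofLp.1 - yk) (w.ofLp.2 - (ak + ee yk)) := rfl
      have hywk : ‖w.ofLp.1 - yk‖ ≤ ‖w - zt‖ := by
        rw [hwzt1]; exact pl2_fst_norm_le _ _
      have hwz : ‖w - zt‖ ≤ 2 * ρ' := by rwa [dist_eq_norm] at hwd
      have hywball : w.ofLp.1 ∈ ball x r := by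
        rw [mem_ball_iff_norm]
        have h6 : w.ofLp.1 - x = (w.ofLp.1 - yk) + (yk - x) := by abel
        have h7 : ‖w.ofLp.1 - x‖ ≤ ‖w.ofLp.1 - yk‖ + ‖yk - x‖ := by
          rw [h6]; exact norm_add_le _ _
        linarith
      set wh : WithLp 2 (Eu n × ℝ) := pl2 w.ofLp.1 (w.ofLp.2 - ee w.ofLp.1) with hwhdef
      have hwhE : wh ∈ epigraphSet (fun y => ⟪lamk k, F y⟫) := by
        show ⟪lamk k, F w.ofLp.1⟫ ≤ w.ofLp.2 - ee w.ofLp.1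
        have := hφsplit w.ofLp.1
        linarith
      have hΔ : |ee w.ofLp.1 - ee yk| ≤ ((K : ℝ) * ε') * ‖w.ofLp.1 - yk‖ := hediff _ _ hywball hykball
      have hwh1 : wh - (zζ k).1 = pl2 (w.ofLp.1 - yk) (w.ofLp.2 - ee w.ofLp.1 - ak) := rfl
      have hnorm_wh : ‖wh - (zζ k).1‖ ≤ ‖w - zt‖ + |ee w.ofLp.1 - ee yk| := by
        rw [hwh1, hwzt1]
        have h7 := pl2_norm_shift (w.ofLp.1 - yk) (w.ofLp.2 - (ak + ee yk)) (w.ofLp.2 - ee w.ofLp.1 - ak)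
        have habs : |w.ofLp.2 - ee w.ofLp.1 - ak - (w.ofLp.2 - (ak + ee yk))| = |ee w.ofLp.1 - ee yk| := by
          rw [← abs_neg]
          congr 1
          ring
        rw [habs] at h7
        exact h7
      have hΔ2 : |ee w.ofLp.1 - ee yk| ≤ ‖w - zt‖ := by
        have h8 : ((K : ℝ) * ε') * ‖w.ofLp.1 - yk‖ ≤ 1 * ‖w - zt‖ :=
          mul_le_mul hε'K hywk (norm_nonneg _) one_pos.le
        rw [one_mul] at h8
        exact hΔ.trans h8
      have hb1 : ‖wh - (zζ k).1‖ ≤ 2 * ‖w - zt‖ := by linarith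
      have hdwh : dist wh ((zζ k).1) ≤ ρ₀ := by
        rw [dist_eq_norm]
        calc ‖wh - (zζ k).1‖ ≤ 2 * ‖w - zt‖ := hb1
          _ ≤ 2 * (2 * ρ') := by linarith
          _ ≤ ρ₀ := by linarith
      have hmain := hρprop wh hwhE hdwh
      have h5 : w - zt = (wh - (zζ k).1) + pl2 0 (ee w.ofLp.1 - ee yk) := by
        rw [hwzt1, hwh1]
        have h9 : pl2 (w.ofLp.1 - yk) (w.ofLp.2 - ee w.ofLp.1 - ak) + pl2 (0 : Eu n) (ee w.ofLp.1 - ee yk)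
            = pl2 ((w.ofLp.1 - yk) + 0) ((w.ofLp.2 - ee w.ofLp.1 - ak) + (ee w.ofLp.1 - ee yk)) := rfl
        rw [h9, add_zero]
        congr 1
        ring
      have hsplit : ⟪ζ, w - zt⟫ = ⟪ζ, wh - (zζ k).1⟫ + ζ.ofLp.2 * (ee w.ofLp.1 - ee yk) := by
        rw [h5, inner_add_right]
        congr 1
        have h10 : ⟪pl2 ζ.ofLp.1 ζ.ofLp.2, pl2 0 (ee w.ofLp.1 - ee yk)⟫
            = ⟪ζ.ofLp.1, (0 : Eu n)⟫ + ζ.ofLp.2 * (ee w.ofLp.1 - ee yk) := pl2_inner _ _ _ _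
        rw [pl2_eta] at h10
        rw [h10]
        simp
      have hζ2abs : |ζ.ofLp.2| ≤ CZ := by
        have h11 := pl2_snd_abs_le ζ.ofLp.1 ζ.ofLp.2
        rw [pl2_eta ζ] at h11
        exact h11.trans hζub
      have e1 : ⟪ζ, wh - (zζ k).1⟫ ≤ ε' * (2 * ‖w - zt‖) := by
        refine hmain.trans ?_
        have := mul_le_mul_of_nonneg_left hb1 hε'0.le
        linarith
      have e2 : ζ.ofLp.2 * (ee w.ofLp.1 - ee yk) ≤ CZ * (((K : ℝ) * ε') * ‖w - zt‖) := by
        have h12 : ζ.ofLp.2 * (ee w.ofLp.1 - ee yk) ≤ |ζ.ofLp.2| * |ee w.ofLp.1 - ee yk| := by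
          calc ζ.ofLp.2 * (ee w.ofLp.1 - ee yk) ≤ |ζ.ofLp.2 * (ee w.ofLp.1 - ee yk)| := le_abs_self _
            _ = |ζ.ofLp.2| * |ee w.ofLp.1 - ee yk| := abs_mul _ _
        have h13 : |ee w.ofLp.1 - ee yk| ≤ ((K : ℝ) * ε') * ‖w - zt‖ :=
          hΔ.trans (mul_le_mul_of_nonneg_left hywk (mul_nonneg hKr0 hε'0.le))
        calc ζ.ofLp.2 * (ee w.ofLp.1 - ee yk) ≤ |ζ.ofLp.2| * |ee w.ofLp.1 - ee yk| := h12
          _ ≤ CZ * (((K : ℝ) * ε') * ‖w - zt‖) :=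
            mul_le_mul hζ2abs h13 (abs_nonneg _) hCZ0.le
      rw [hsplit]
      have h14 := add_le_add e1 e2
      refine h14.trans (le_of_eq ?_)
      ring
    -- projection step
    have hφcl : IsClosed (epigraphSet fun y => ⟪lam, F y⟫) :=
      epigraph_closed (continuous_const.inner hFc)
    have hφne : (epigraphSet fun y => ⟪lam, F y⟫).Nonempty :=
      ⟨pl2 x ⟪lam, F x⟫, le_refl ⟪lam, F x⟫⟩
    set zh : WithLp 2 (Eu n × ℝ) := zt + ρ' • (‖ζ‖⁻¹ • ζ) with hzhdef
    obtain ⟨w', hw'E, hw'dist, hw'pol⟩ := proj_regNormal hφcl hφne zh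
    have hdzz : dist zh zt = ρ' := by
      rw [dist_eq_norm]
      have h14 : zh - zt = ρ' • (‖ζ‖⁻¹ • ζ) := by rw [hzhdef]; abel
      rw [h14, norm_smul, norm_inv_smul hζne, Real.norm_eq_abs, abs_of_pos hρ'0, mul_one]
    have hw'z : dist zh w' ≤ ρ' := by
      rw [hw'dist]
      exact (infDist_le_dist_of_mem hztE).trans hdzz.le
    have hu2 : ‖w' - zt‖ ≤ 2 * ρ' := by
      have h15 : w' - zt = (w' - zh) + (zh - zt) := by abel
      have h16 : ‖w' - zh‖ ≤ ρ' := by rw [← dist_eq_norm, dist_comm]; exact hw'z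
      have h17 : ‖zh - zt‖ = ρ' := by rw [← dist_eq_norm]; exact hdzz
      calc ‖w' - zt‖ = ‖(w' - zh) + (zh - zt)‖ := by rw [← h15]
        _ ≤ ‖w' - zh‖ + ‖zh - zt‖ := norm_add_le _ _
        _ ≤ 2 * ρ' := by linarith
    have huρ : dist w' zt ≤ 2 * ρ' := by rw [dist_eq_norm]; exact hu2
    have hεapp := hepsφ w' hw'E huρ
    set ε₁ : ℝ := (2 + CZ * (K : ℝ)) * ε' with hε₁def
    have hε₁0 : 0 ≤ ε₁ := by
      rw [hε₁def]
      exact mul_nonneg (by linarith) hε'0.le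
    have hexp : ‖zh - w'‖ ^ 2
        = ρ' ^ 2 - 2 * (ρ' * (‖ζ‖⁻¹ * ⟪ζ, w' - zt⟫)) + ‖w' - zt‖ ^ 2 := by
      have h18 : zh - w' = ρ' • (‖ζ‖⁻¹ • ζ) - (w' - zt) := by rw [hzhdef]; abel
      rw [h18, norm_sub_sq_real, norm_smul, norm_inv_smul hζne, Real.norm_eq_abs,
        abs_of_pos hρ'0, mul_one, real_inner_smul_left, real_inner_smul_left]
    have hle : ‖zh - w'‖ ^ 2 ≤ ρ' ^ 2 := by
      have h19 : ‖zh - w'‖ ≤ ρ' := by rw [← dist_eq_norm]; exact hw'z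
      exact pow_le_pow_left₀ (norm_nonneg _) h19 2
    have hinv2 : ‖ζ‖⁻¹ ≤ 2 :=
      inv_le_of_inv_le₀ (by norm_num) (le_trans (by norm_num) hζlb)
    have hNbound : ‖w' - zt‖ ≤ 4 * ρ' * ε₁ := by
      have hNsq : ‖w' - zt‖ ^ 2 ≤ 2 * (ρ' * (‖ζ‖⁻¹ * ⟪ζ, w' - zt⟫)) := by
        linarith [hexp, hle]
      have hiI : ‖ζ‖⁻¹ * ⟪ζ, w' - zt⟫ ≤ 2 * (ε₁ * ‖w' - zt‖) :=
        arith_iI (inv_nonneg.2 (norm_nonneg ζ)) hinv2 hεapp hε₁0 (norm_nonneg _)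
      exact arith_N (norm_nonneg _) hρ'0 hε₁0 hNsq hiI
    set ηn : WithLp 2 (Eu n × ℝ) := (ρ'⁻¹ * ‖ζ‖) • (zh - w') with hηdef
    have hηreg : ηn ∈ regNormal (epigraphSet fun y => ⟪lam, F y⟫) w' :=
      ⟨hw'E, polarCone_smul (mul_nonneg (inv_nonneg.2 hρ'0.le) (norm_nonneg _)) hw'pol⟩
    have hηζ : ‖ηn - ζ‖ ≤ 4 * CZ * ε₁ := by
      have h22 : zh - w' = ρ' • (‖ζ‖⁻¹ • ζ) - (w' - zt) := by rw [hzhdef]; abel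
      have h23 : ηn - ζ = -((ρ'⁻¹ * ‖ζ‖) • (w' - zt)) := by
        rw [hηdef, h22, smul_sub]
        have hζn0 : ‖ζ‖ ≠ 0 := norm_ne_zero_iff.2 hζne
        have hρn0 : ρ' ≠ 0 := ne_of_gt hρ'0
        have hs : (ρ'⁻¹ * ‖ζ‖) • (ρ' • (‖ζ‖⁻¹ • ζ)) = ζ := by
          rw [smul_smul, smul_smul]
          have hcoef : ρ'⁻¹ * ‖ζ‖ * ρ' * ‖ζ‖⁻¹ = 1 := by
            field_simp
          rw [hcoef, one_smul]
        rw [hs]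
        abel
      rw [h23, norm_neg, norm_smul, Real.norm_eq_abs,
        abs_of_nonneg (mul_nonneg (inv_nonneg.2 hρ'0.le) (norm_nonneg _))]
      calc ρ'⁻¹ * ‖ζ‖ * ‖w' - zt‖ ≤ ρ'⁻¹ * ‖ζ‖ * (4 * ρ' * ε₁) :=
          mul_le_mul_of_nonneg_left hNbound
            (mul_nonneg (inv_nonneg.2 hρ'0.le) (norm_nonneg _))
        _ = 4 * ‖ζ‖ * ε₁ := by field_simp
        _ ≤ 4 * CZ * ε₁ := by
            have h28 := mul_le_mul_of_nonneg_right hζub hε₁0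
            linarith
    have hfin : D * ε' ≤ ε := by
      have h25 := mul_le_mul_of_nonneg_left hε'D hD0.le
      have h26 : D * (ε / D) = ε := by
        rw [mul_comm]
        exact div_mul_cancel₀ ε (ne_of_gt hD0)
      rw [h26] at h25
      exact h25
    refine ⟨w', ηn, hηreg, ?_, ?_⟩
    · have hd3 : dist w' (pl2 x ⟪lam, F x⟫)
          ≤ dist w' zt + dist zt ((zζ k).1) + dist ((zζ k).1) (pl2 x ⟪lam, F x⟫) :=
        dist_triangle4 _ _ _ _
      have hd4 : dist zt ((zζ k).1) = |ee yk| := by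
        rw [dist_eq_norm]
        have h24 : zt - (zζ k).1 = pl2 (yk - yk) ((ak + ee yk) - ak) := rfl
        rw [h24, sub_self, add_sub_cancel_left, pl2_norm_zero_fst]
      have hd5 : dist w' zt ≤ 4 * ρ' * ε₁ := by rw [dist_eq_norm]; exact hNbound
      have htot : dist w' (pl2 x ⟪lam, F x⟫) ≤ D * ε' := by
        have hb : dist w' (pl2 x ⟪lam, F x⟫) ≤ 4 * ρ' * ε₁ + ε' * CF + ε' := by
          rw [hd4] at hd3
          linarith [hd3, hd5, heyk, hk2]
        have hcoef : 4 * ρ' * ε₁ + ε' * CF + ε' ≤ D * ε' := by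
          rw [hDdef, hε₁def]
          exact arith_coef1 hε'0 hε'half hKr0 hCZ1 hCF1 hρ'0 hρ'ε' le_rfl
        linarith
      exact htot.trans hfin
    · have hd6 : dist ηn (pl2 ξ (-1)) ≤ ‖ηn - ζ‖ + dist ζ (pl2 ξ (-1)) := by
        rw [dist_eq_norm, dist_eq_norm]
        have h27 : ηn - pl2 ξ (-1) = (ηn - ζ) + (ζ - pl2 ξ (-1)) := by abel
        rw [h27]
        exact norm_add_le _ _
      have htot2 : dist ηn (pl2 ξ (-1)) ≤ D * ε' := by
        have hcoef2 : 4 * CZ * ε₁ + ε' ≤ D * ε' := by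
          rw [hDdef, hε₁def]
          exact arith_coef2 hε'0 hKr0 hCZ1 hCF1 le_rfl
        linarith [hd6, hηζ, hk3]
      exact htot2.trans hfin
  -- conclude from the claim
  show pl2 ξ (-1) ∈ limNormal (epigraphSet fun y => ⟪lam, F y⟫) (pl2 x ⟪lam, F x⟫)
  have hsel2 : ∀ m : ℕ, ∃ wη : (WithLp 2 (Eu n × ℝ)) × (WithLp 2 (Eu n × ℝ)),
      wη.2 ∈ regNormal (epigraphSet fun y => ⟪lam, F y⟫) wη.1 ∧
      dist wη.1 (pl2 x ⟪lam, F x⟫) ≤ 1 / (m + 1) ∧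
      dist wη.2 (pl2 ξ (-1)) ≤ 1 / (m + 1) := by
    intro m
    obtain ⟨w, η, h1, h2, h3⟩ := key (1 / (m + 1)) (by positivity)
    exact ⟨(w, η), h1, h2, h3⟩
  choose wη hregw hd1 hd2 using hsel2
  exact ⟨le_refl ⟪lam, F x⟫, fun m => (wη m).1, fun m => (wη m).2,
    tendsto_of_dist_le hd1 tendsto_const_nhds, tendsto_of_dist_le hd2 tendsto_const_nhds, hregw⟩

end ScalClosed


/-- An AM-stationary point with a bounded multiplier sequence is M-stationary. -/
theorem stmt11 {n l : ℕ}
    (f : Eu n → ℝ) (hf : ContDiff ℝ 1 f)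
    (F : Eu n → Eu l) (F' : Eu n → Eu n → Eu l)
    (hLip : LocallyLipschitz F) (hF' : IsDirDeriv F F')
    (Γ : Set (Eu l)) (hΓne : Γ.Nonempty) (hΓcl : IsClosed Γ)
    (x : Eu n) (hfeas : F x ∈ Γ)
    (xk : ℕ → Eu n) (lamk δk : ℕ → Eu l) (εk : ℕ → Eu n)
    (hAM : AMSeq f F Γ x xk lamk δk εk)
    (hbd : ∃ M : ℝ, ∀ k, ‖lamk k‖ ≤ M) :
    MStat f F Γ x := by
  obtain ⟨M, hM⟩ := hbd
  obtain ⟨h1, h2, h3, h4, h5⟩ := hAM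
  obtain ⟨lam, -, σ, hσ, hlamσ⟩ := (isCompact_closedBall (0 : Eu l) M).tendsto_subseq
    (fun k => mem_closedBall_zero_iff.2 (hM k))
  have hσt : Tendsto σ atTop atTop := hσ.tendsto_atTop
  have hgrad : Continuous fun y => gradient f y := by
    have hgr : (fun y => gradient f y)
        = fun y => (InnerProductSpace.toDual ℝ (Eu n)).symm (fderiv ℝ f y) := rfl
    rw [hgr]
    exact (InnerProductSpace.toDual ℝ (Eu n)).symm.continuous.comp
      (hf.continuous_fderiv one_ne_zero)
  have hξ : Tendsto (fun k => εk (σ k) - gradient f (xk (σ k))) atTop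
      (𝓝 (-gradient f x)) := by
    have h6 := (h5.comp hσt).sub ((hgrad.tendsto x).comp (h3.comp hσt))
    simpa using h6
  refine ⟨lam, ?_, ?_⟩
  · exact scal_closed hLip (h3.comp hσt) hlamσ hξ (fun k => h1 (σ k))
  · have hFx : Tendsto (fun k => F (xk (σ k)) - δk (σ k)) atTop (𝓝 (F x)) := by
      have h7 := ((hLip.continuous.tendsto x).comp (h3.comp hσt)).sub (h4.comp hσt)
      simpa using h7
    exact limNormal_osc hΓcl hFx hlamσ (fun k => h2 (σ k))

end
end
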